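/- arXiv:2307.12958 — 5 statements merged into one kernel-verified Lean document; each statement's English description precedes it below -/
import Mathlib

section
/- Let X be a real Banach space containing a complemented isomorphic copy of ℓ₁. Then there exists a nonempty bounded closed convex set K ⊆ B_X that is a Lipschitz retract of B_X and admits a uniformly Lipschitz fixed-point-free map F : K → K with d(F,K) = 0. -/
open Metric Set Filter Topology

set_option maxHeartbeats 1000000
noncomputable section

abbrev E1 := lp (fun _ : ℕ => ℝ) 1

lemma E1norm_eq (x : E1) : ‖x‖ = ∑' i, |x i| := by
  have := lp.norm_eq_tsum_rpow (p := 1) (by norm_num) x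
  simpa using this

lemma E1summable (x : E1) : Summable (fun i => |x i|) := by
  have := lp.memℓp x
  rw [memℓp_gen_iff (by norm_num)] at this
  simpa using this

def Tfun (x : E1) : ℕ → ℝ := fun i => match i with
  | 0 => 1 - ‖x‖
  | (j+1) => x j

lemma memT (x : E1) : Memℓp (Tfun x) 1 := by
  apply memℓp_gen
  simp only [ENNReal.toReal_one, Real.rpow_one]
  rw [← summable_nat_add_iff 1]
  exact (E1summable x).congr (fun i => by simp [Tfun])

def Tmap (x : E1) : E1 := ⟨Tfun x, memT x⟩

lemma Tmap_apply (x : E1) (i : ℕ) : (Tmap x) i = Tfun x i := rfl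

lemma tsum_succ (f : ℕ → ℝ) (hf : Summable f) : ∑' i, f i = f 0 + ∑' i, f (i+1) :=
  Summable.tsum_eq_zero_add hf

lemma norm_Tmap_sub (x y : E1) : ‖Tmap x - Tmap y‖ = |‖x‖ - ‖y‖| + ‖x - y‖ := by
  have hs : Summable (fun i => |(Tmap x - Tmap y) i|) := E1summable _
  have h0 : |(Tmap x - Tmap y) 0| = |‖x‖ - ‖y‖| := by
    have e : (Tmap x - Tmap y) 0 = (1 - ‖x‖) - (1 - ‖y‖) := by
      simp only [lp.coeFn_sub, Pi.sub_apply]; rfl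
    have e2 : (1 - ‖x‖) - (1 - ‖y‖) = -(‖x‖ - ‖y‖) := by ring
    rw [e, e2, abs_neg]
  have h1 : ∀ i : ℕ, |(Tmap x - Tmap y) (i+1)| = |(x - y) i| := by
    intro i
    have e : (Tmap x - Tmap y) (i+1) = x i - y i := by
      simp only [lp.coeFn_sub, Pi.sub_apply]; rfl
    rw [e]; simp
  rw [E1norm_eq (Tmap x - Tmap y), Summable.tsum_eq_zero_add hs, h0, E1norm_eq (x - y),
    tsum_congr h1]

lemma norm_Tmap (x : E1) (hx : ‖x‖ ≤ 1) : ‖Tmap x‖ = 1 := by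
  have hs : Summable (fun i => |(Tmap x) i|) := E1summable _
  have h0 : |(Tmap x) 0| = 1 - ‖x‖ := by
    have e : (Tmap x) 0 = 1 - ‖x‖ := rfl
    rw [e, abs_of_nonneg (by linarith)]
  have h1 : ∑' i, |(Tmap x) (i+1)| = ‖x‖ := by
    rw [E1norm_eq]
    exact tsum_congr fun i => rfl
  rw [E1norm_eq, Summable.tsum_eq_zero_add hs, h0, h1]; ring

lemma Tmap_ne (x : E1) (hx : ‖x‖ ≤ 1) : Tmap x ≠ x := by
  intro h
  have hcoord : ∀ i, x i = x 0 := by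
    intro i
    induction i with
    | zero => rfl
    | succ j ih =>
      have := congrArg (fun z : E1 => z (j+1)) h
      simp only [Tmap_apply, Tfun] at this
      rw [← this]
      exact ih
  have hsum : Summable (fun i : ℕ => |x 0|) := (E1summable x).congr (fun i => by rw [hcoord i])
  have hx0 : x 0 = 0 := by
    by_contra h0
    have := (summable_const_iff _).mp hsum
    simp at this
    exact h0 this
  have hzero : x = 0 := by
    ext i
    rw [hcoord i, hx0]; rfl
  have := congrArg (fun z : E1 => z 0) h
  simp only [Tmap_apply, Tfun] at this
  rw [hzero] at this
  simp at this

def radE (x : E1) : E1 := (max ‖x‖ 1)⁻¹ • x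

lemma radE_norm_le (x : E1) : ‖radE x‖ ≤ 1 := by
  have h1 : (0:ℝ) < max ‖x‖ 1 := lt_of_lt_of_le one_pos (le_max_right _ _)
  rw [radE, norm_smul, Real.norm_eq_abs, abs_of_pos (inv_pos.mpr h1)]
  rw [inv_mul_le_iff₀ h1, mul_one]
  exact le_max_left _ _

lemma radE_eq (x : E1) (h : ‖x‖ ≤ 1) : radE x = x := by
  rw [radE, max_eq_right h, inv_one, one_smul]

lemma radE_lip (x y : E1) : ‖radE x - radE y‖ ≤ 2 * ‖x - y‖ := by
  set a := max ‖x‖ 1 with ha'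
  set b := max ‖y‖ 1 with hb'
  have ha : (1:ℝ) ≤ a := le_max_right _ _
  have hb : (1:ℝ) ≤ b := le_max_right _ _
  have ha0 : (0:ℝ) < a := lt_of_lt_of_le one_pos ha
  have hb0 : (0:ℝ) < b := lt_of_lt_of_le one_pos hb
  have hab : |a - b| ≤ ‖x - y‖ :=
    le_trans (abs_max_sub_max_le_abs _ _ _) (abs_norm_sub_norm_le x y)
  have key : radE x - radE y = a⁻¹ • (x - y) + (a⁻¹ - b⁻¹) • y := by
    rw [radE, radE, smul_sub, sub_smul]
    abel
  have hy : ‖y‖ ≤ b := le_max_left _ _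
  calc ‖radE x - radE y‖ ≤ ‖a⁻¹ • (x - y)‖ + ‖(a⁻¹ - b⁻¹) • y‖ := by rw [key]; exact norm_add_le _ _
    _ = a⁻¹ * ‖x - y‖ + |a⁻¹ - b⁻¹| * ‖y‖ := by
        rw [norm_smul, norm_smul, Real.norm_eq_abs, Real.norm_eq_abs,
          abs_of_pos (inv_pos.mpr ha0)]
    _ ≤ 2 * ‖x - y‖ := by
        have h1 : a⁻¹ * ‖x - y‖ ≤ ‖x - y‖ := by
          have : a⁻¹ ≤ 1 := by rw [inv_le_one_iff₀]; right; exact ha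
          nlinarith [norm_nonneg (x - y)]
        have h2 : |a⁻¹ - b⁻¹| * ‖y‖ ≤ ‖x - y‖ := by
          have e : |a⁻¹ - b⁻¹| = |a - b| / (a * b) := by
            rw [abs_sub_comm, ← abs_of_pos (mul_pos ha0 hb0), ← abs_div]
            congr 1
            field_simp
          rw [e]
          calc |a - b| / (a * b) * ‖y‖ ≤ |a - b| / (a * b) * b := by
                apply mul_le_mul_of_nonneg_left hy
                positivity
            _ = |a - b| / a := by field_simp
            _ ≤ |a - b| := by
                rw [div_le_iff₀ ha0]
                nlinarith [abs_nonneg (a - b)]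
            _ ≤ ‖x - y‖ := hab
        linarith

def wseq (n : ℕ) : ℕ → ℝ := fun i => if i < n + 1 then ((n : ℝ) + 1)⁻¹ else 0

lemma wseq_zero (n : ℕ) (i : ℕ) (hi : i ∉ Finset.range (n+1)) : wseq n i = 0 := by
  simp only [wseq]
  rw [if_neg (by simp at hi; omega)]

lemma memW (n : ℕ) : Memℓp (wseq n) 1 := by
  apply memℓp_gen
  simp only [ENNReal.toReal_one, Real.rpow_one]
  apply summable_of_ne_finset_zero (s := Finset.range (n+1))
  intro i hi
  rw [wseq_zero n i hi, norm_zero]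

def W (n : ℕ) : E1 := ⟨wseq n, memW n⟩

lemma W_apply (n i : ℕ) : (W n) i = wseq n i := rfl

lemma norm_W (n : ℕ) : ‖W n‖ = 1 := by
  rw [E1norm_eq]
  rw [tsum_eq_sum (s := Finset.range (n+1)) (fun i hi => by rw [W_apply, wseq_zero n i hi, abs_zero])]
  have : ∀ i ∈ Finset.range (n+1), |(W n) i| = ((n:ℝ)+1)⁻¹ := by
    intro i hi
    rw [W_apply, wseq, if_pos (by simpa using hi)]
    rw [abs_of_nonneg (by positivity)]
  rw [Finset.sum_congr rfl this, Finset.sum_const, Finset.card_range, nsmul_eq_mul]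
  push_cast
  field_simp

lemma norm_W_sub_T (n : ℕ) : ‖W n - Tmap (W n)‖ = 2 * ((n:ℝ)+1)⁻¹ := by
  set d := W n - Tmap (W n) with hd
  have hd0 : d 0 = ((n:ℝ)+1)⁻¹ := by
    have : d 0 = (W n) 0 - (1 - ‖W n‖) := by
      simp only [hd, lp.coeFn_sub, Pi.sub_apply]; rfl
    rw [this, norm_W, W_apply]
    norm_num [wseq]
  have hdsucc : ∀ i : ℕ, d (i+1) = wseq n (i+1) - wseq n i := by
    intro i
    simp only [hd, lp.coeFn_sub, Pi.sub_apply]; rfl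
  have hzero : ∀ i ∉ ({0, n+1} : Finset ℕ), |d i| = 0 := by
    intro i hi
    simp only [Finset.mem_insert, Finset.mem_singleton, not_or] at hi
    obtain ⟨h0, hn⟩ := hi
    obtain ⟨j, rfl⟩ := Nat.exists_eq_succ_of_ne_zero h0
    rw [hdsucc j]
    rcases lt_or_ge (j+1) (n+1) with h | h
    · rw [wseq, wseq, if_pos h, if_pos (Nat.lt_of_succ_lt h), sub_self, abs_zero]
    · have h' : ¬ j < n + 1 := by omega
      rw [wseq, wseq, if_neg (by omega), if_neg h', sub_self, abs_zero]
  rw [E1norm_eq, tsum_eq_sum (s := ({0, n+1} : Finset ℕ)) hzero,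
    Finset.sum_pair (by omega : 0 ≠ n+1), hd0, hdsucc n,
    wseq, wseq, if_neg (by omega), if_pos (by omega)]
  rw [abs_of_nonneg (by positivity), zero_sub, abs_neg, abs_of_nonneg (by positivity)]
  ring

lemma Tmap_iter_norm (n : ℕ) (x : E1) (hx : ‖x‖ ≤ 1) : ‖Tmap^[n+1] x‖ = 1 := by
  induction n with
  | zero => exact norm_Tmap x hx
  | succ m ih =>
    rw [Function.iterate_succ_apply']
    exact norm_Tmap _ (le_of_eq ih)

lemma Tmap_iter_lip (n : ℕ) (x y : E1) (hx : ‖x‖ ≤ 1) (hy : ‖y‖ ≤ 1) :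
    ‖Tmap^[n+1] x‖ = 1 ∧ ‖Tmap^[n+1] x - Tmap^[n+1] y‖ ≤ 2 * ‖x - y‖ := by
  induction n with
  | zero =>
    refine ⟨norm_Tmap x hx, ?_⟩
    simp only [zero_add, Function.iterate_one]
    rw [norm_Tmap_sub]
    have := abs_norm_sub_norm_le x y
    linarith
  | succ m ih =>
    obtain ⟨ih1, ih2⟩ := ih
    have ih1y : ‖Tmap^[m+1] y‖ = 1 := Tmap_iter_norm m y hy
    constructor
    · rw [Function.iterate_succ_apply']
      exact norm_Tmap _ (le_of_eq ih1)
    · rw [show Tmap^[m+1+1] x = Tmap (Tmap^[m+1] x) from Function.iterate_succ_apply' _ _ _,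
        show Tmap^[m+1+1] y = Tmap (Tmap^[m+1] y) from Function.iterate_succ_apply' _ _ _,
        norm_Tmap_sub, ih1, ih1y]
      simpa using ih2


/-- Let `X` be a real Banach space containing a complemented isomorphic
copy of `ℓ₁`.  Then there exists a nonempty bounded closed convex set `K ⊆ B_X` that is a
Lipschitz retract of `B_X` and admits a uniformly Lipschitz fixed-point-free self-map with
null minimal displacement. -/
theorem statement10 {X : Type*} [NormedAddCommGroup X] [NormedSpace ℝ X] [CompleteSpace X]
    (hl1 : ∃ (f : (lp (fun _ : ℕ => ℝ) 1) →L[ℝ] X) (c : ℝ) (P : X →L[ℝ] X),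
      0 < c ∧ (∀ u : lp (fun _ : ℕ => ℝ) 1, c * ‖u‖ ≤ ‖f u‖) ∧
      (∀ y : X, P (P y) = P y) ∧ Set.range P = Set.range f) :
    ∃ K : Set X,
      K.Nonempty ∧ Bornology.IsBounded K ∧ IsClosed K ∧ Convex ℝ K ∧
      K ⊆ Metric.closedBall (0 : X) 1 ∧
      (∃ R : X → X, Set.MapsTo R (Metric.closedBall (0 : X) 1) K ∧
        (∀ y ∈ K, R y = y) ∧
        ∃ L : ℝ, 0 ≤ L ∧ ∀ y ∈ Metric.closedBall (0 : X) 1,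
          ∀ z ∈ Metric.closedBall (0 : X) 1, ‖R y - R z‖ ≤ L * ‖y - z‖) ∧
      (∃ F : X → X, Set.MapsTo F K K ∧ (∀ y ∈ K, F y ≠ y) ∧
        (∃ L : ℝ, 0 ≤ L ∧ ∀ n : ℕ, ∀ y ∈ K, ∀ z ∈ K,
          ‖F^[n] y - F^[n] z‖ ≤ L * ‖y - z‖) ∧
        sInf ((fun y => ‖y - F y‖) '' K) = 0) := by
  obtain ⟨f, c, P, hc, hcb, hPP, hrange⟩ := hl1
  have hf0 : (0:ℝ) ≤ ‖f‖ := norm_nonneg _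
  set ε : ℝ := (1 + ‖f‖)⁻¹ with hε
  have hεpos : 0 < ε := by positivity
  have hεne : ε ≠ 0 := ne_of_gt hεpos
  set F0 : E1 →L[ℝ] X := ε • f with hF0
  have hF0apply : ∀ x : E1, F0 x = ε • f x := fun x => rfl
  have hF0norm : ∀ x : E1, ‖F0 x‖ = ε * ‖f x‖ := by
    intro x
    rw [hF0apply, norm_smul, Real.norm_eq_abs, abs_of_pos hεpos]
  have hF0lower : ∀ x : E1, ε * c * ‖x‖ ≤ ‖F0 x‖ := by
    intro x
    rw [hF0norm]
    have := hcb x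
    nlinarith
  have hfinj : Function.Injective (f : E1 → X) := by
    intro u v huv
    have h := hcb (u - v)
    rw [map_sub, huv, sub_self, norm_zero] at h
    have : ‖u - v‖ ≤ 0 := by nlinarith [norm_nonneg (u - v)]
    have : u - v = 0 := by
      rw [← norm_le_zero_iff]; exact this
    exact sub_eq_zero.mp this
  have hF0inj : Function.Injective (F0 : E1 → X) := by
    intro u v huv
    rw [hF0apply, hF0apply] at huv
    exact hfinj (smul_right_injective X hεne huv)
  set g : X → E1 := Function.invFun (f : E1 → X) with hg
  have hginv : ∀ x : E1, g (f x) = x := fun x => hfinj (Function.invFun_eq ⟨x, rfl⟩)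
  have hgmem : ∀ y ∈ Set.range (f : E1 → X), f (g y) = y := fun y hy => Function.invFun_eq hy
  have hgbound : ∀ y ∈ Set.range (f : E1 → X), ∀ z ∈ Set.range (f : E1 → X),
      ‖g y - g z‖ ≤ c⁻¹ * ‖y - z‖ := by
    intro y hy z hz
    have h := hcb (g y - g z)
    rw [map_sub, hgmem y hy, hgmem z hz] at h
    rw [← mul_le_mul_iff_right₀ hc]
    calc c * ‖g y - g z‖ ≤ ‖y - z‖ := h
      _ = c * (c⁻¹ * ‖y - z‖) := by field_simp
  set K : Set X := (F0 : E1 → X) '' Metric.closedBall 0 1 with hK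
  have hmemK : ∀ x : E1, ‖x‖ ≤ 1 → F0 x ∈ K := by
    intro x hx
    exact ⟨x, by simpa [Metric.mem_closedBall, dist_zero_right] using hx, rfl⟩
  have hKsub : K ⊆ Metric.closedBall (0 : X) 1 := by
    rintro y ⟨x, hx, rfl⟩
    rw [Metric.mem_closedBall, dist_zero_right] at hx ⊢
    rw [hF0norm]
    have h1 : ‖f x‖ ≤ ‖f‖ * ‖x‖ := f.le_opNorm x
    have h2 : ‖f x‖ ≤ ‖f‖ := by nlinarith [norm_nonneg (f x)]
    rw [hε]
    rw [inv_mul_le_iff₀ (by positivity)]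
    nlinarith
  -- antilipschitz / closedness
  have hanti : AntilipschitzWith ⟨(ε * c)⁻¹, by positivity⟩ (F0 : E1 → X) := by
    apply AddMonoidHomClass.antilipschitz_of_bound
    intro x
    have h := hF0lower x
    have hεc : 0 < ε * c := by positivity
    show ‖x‖ ≤ (ε * c)⁻¹ * ‖F0 x‖
    rw [← mul_le_mul_iff_right₀ hεc]
    calc ε * c * ‖x‖ ≤ ‖F0 x‖ := h
      _ = ε * c * ((ε * c)⁻¹ * ‖F0 x‖) := by field_simp
  have hKclosed : IsClosed K :=
    (hanti.isClosedEmbedding F0.uniformContinuous).isClosedMap _ Metric.isClosed_closedBall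
  have hKconvex : Convex ℝ K := by
    have := (convex_closedBall (0 : E1) 1).linear_image (F0 : E1 →ₗ[ℝ] X)
    simpa [hK] using this
  have hKne : K.Nonempty := ⟨F0 0, hmemK 0 (by simp)⟩
  -- retraction
  set R : X → X := fun y => F0 (radE (ε⁻¹ • g (P y))) with hR
  have hRmaps : Set.MapsTo R (Metric.closedBall (0 : X) 1) K := by
    intro y _
    exact hmemK _ (radE_norm_le _)
  have hKrangef : ∀ y ∈ K, y ∈ Set.range (f : E1 → X) := by
    rintro y ⟨x, _, rfl⟩
    exact ⟨ε • x, by rw [map_smul]; rfl⟩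
  have hPfix : ∀ y ∈ Set.range (f : E1 → X), P y = y := by
    intro y hy
    rw [← hrange] at hy
    obtain ⟨w, rfl⟩ := hy
    exact hPP w
  have hgF0 : ∀ x : E1, g (F0 x) = ε • x := by
    intro x
    have : F0 x = f (ε • x) := by rw [map_smul]; rfl
    rw [this, hginv]
  have hRid : ∀ y ∈ K, R y = y := by
    rintro y hyK
    obtain ⟨x, hx, rfl⟩ := hyK
    rw [Metric.mem_closedBall, dist_zero_right] at hx
    show F0 (radE (ε⁻¹ • g (P (F0 x)))) = F0 x
    have h1 : P (F0 x) = F0 x := hPfix _ (hKrangef _ (hmemK x hx))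
    rw [h1, hgF0, smul_smul, inv_mul_cancel₀ hεne, one_smul, radE_eq x hx]
  have hRlip : ∀ y z : X, ‖R y - R z‖ ≤ (2 * ‖f‖ * (c⁻¹ * ‖P‖)) * ‖y - z‖ := by
    intro y z
    rw [hR]
    set u := ε⁻¹ • g (P y) with hu
    set v := ε⁻¹ • g (P z) with hv
    have hPy : P y ∈ Set.range (f : E1 → X) := by rw [← hrange]; exact ⟨y, rfl⟩
    have hPz : P z ∈ Set.range (f : E1 → X) := by rw [← hrange]; exact ⟨z, rfl⟩
    calc ‖F0 (radE u) - F0 (radE v)‖ = ‖F0 (radE u - radE v)‖ := by rw [map_sub]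
      _ = ε * ‖f (radE u - radE v)‖ := hF0norm _
      _ ≤ ε * (‖f‖ * ‖radE u - radE v‖) := by
          exact mul_le_mul_of_nonneg_left (f.le_opNorm _) (le_of_lt hεpos)
      _ ≤ ε * (‖f‖ * (2 * ‖u - v‖)) := by
          gcongr
          exact radE_lip u v
      _ = ε * ‖f‖ * 2 * (ε⁻¹ * ‖g (P y) - g (P z)‖) := by
          rw [hu, hv, ← smul_sub, norm_smul, Real.norm_eq_abs, abs_of_pos (inv_pos.mpr hεpos)]
          ring
      _ ≤ ε * ‖f‖ * 2 * (ε⁻¹ * (c⁻¹ * ‖P y - P z‖)) := by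
          gcongr
          exact hgbound _ hPy _ hPz
      _ ≤ ε * ‖f‖ * 2 * (ε⁻¹ * (c⁻¹ * (‖P‖ * ‖y - z‖))) := by
          gcongr
          rw [← map_sub]; exact P.le_opNorm _
      _ = (2 * ‖f‖ * (c⁻¹ * ‖P‖)) * ‖y - z‖ := by
          field_simp
  -- the fixed-point-free map
  set F : X → X := fun y => F0 (Tmap (ε⁻¹ • g y)) with hF
  have hkey : ∀ x : E1, F (F0 x) = F0 (Tmap x) := by
    intro x
    rw [hF]
    simp only
    rw [hgF0, smul_smul, inv_mul_cancel₀ hεne, one_smul]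
  have hFmaps : Set.MapsTo F K K := by
    rintro y ⟨x, hx, rfl⟩
    rw [Metric.mem_closedBall, dist_zero_right] at hx
    rw [hkey]
    exact hmemK _ (le_of_eq (norm_Tmap x hx))
  have hFne : ∀ y ∈ K, F y ≠ y := by
    rintro y ⟨x, hx, rfl⟩ h
    rw [Metric.mem_closedBall, dist_zero_right] at hx
    rw [hkey] at h
    exact Tmap_ne x hx (hF0inj h)
  have hFiter : ∀ n : ℕ, ∀ x : E1, F^[n] (F0 x) = F0 (Tmap^[n] x) := by
    intro n
    induction n with
    | zero => intro x; simp
    | succ m ih =>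
      intro x
      rw [Function.iterate_succ_apply, Function.iterate_succ_apply, hkey, ih]
  have hFlip : ∀ n : ℕ, ∀ y ∈ K, ∀ z ∈ K, ‖F^[n] y - F^[n] z‖ ≤ (2 * ‖f‖ * c⁻¹) * ‖y - z‖ := by
    rintro n y ⟨x, hx, rfl⟩ z ⟨x', hx', rfl⟩
    rw [Metric.mem_closedBall, dist_zero_right] at hx hx'
    rw [hFiter n x, hFiter n x']
    have hT : ‖Tmap^[n] x - Tmap^[n] x'‖ ≤ 2 * ‖x - x'‖ := by
      cases n with
      | zero => simp; nlinarith [norm_nonneg (x - x')]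
      | succ m => exact (Tmap_iter_lip m x x' hx hx').2
    have hback : ‖x - x'‖ ≤ (ε * c)⁻¹ * ‖F0 x - F0 x'‖ := by
      have h := hF0lower (x - x')
      rw [map_sub] at h
      have hεc : 0 < ε * c := by positivity
      rw [← mul_le_mul_iff_right₀ hεc]
      calc ε * c * ‖x - x'‖ ≤ ‖F0 x - F0 x'‖ := h
        _ = ε * c * ((ε * c)⁻¹ * ‖F0 x - F0 x'‖) := by field_simp
    calc ‖F0 (Tmap^[n] x) - F0 (Tmap^[n] x')‖ = ‖F0 (Tmap^[n] x - Tmap^[n] x')‖ := by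
          rw [map_sub]
      _ = ε * ‖f (Tmap^[n] x - Tmap^[n] x')‖ := hF0norm _
      _ ≤ ε * (‖f‖ * ‖Tmap^[n] x - Tmap^[n] x'‖) :=
          mul_le_mul_of_nonneg_left (f.le_opNorm _) (le_of_lt hεpos)
      _ ≤ ε * (‖f‖ * (2 * ‖x - x'‖)) := by gcongr
      _ ≤ ε * (‖f‖ * (2 * ((ε * c)⁻¹ * ‖F0 x - F0 x'‖))) := by gcongr
      _ = (2 * ‖f‖ * c⁻¹) * ‖F0 x - F0 x'‖ := by
          field_simp
  -- minimal displacement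
  have hsinf : sInf ((fun y => ‖y - F y‖) '' K) = 0 := by
    set S := (fun y => ‖y - F y‖) '' K with hS
    have hSne : S.Nonempty := hKne.image _
    have hSlb : ∀ s ∈ S, (0:ℝ) ≤ s := by
      rintro s ⟨y, _, rfl⟩
      exact norm_nonneg _
    have hbdd : BddBelow S := ⟨0, fun s hs => hSlb s hs⟩
    have hupper : ∀ n : ℕ, sInf S ≤ 2 * ε * ‖f‖ * ((n:ℝ)+1)⁻¹ := by
      intro n
      have hW : F0 (W n) ∈ K := hmemK _ (le_of_eq (norm_W n))
      have hval : ‖F0 (W n) - F (F0 (W n))‖ ≤ 2 * ε * ‖f‖ * ((n:ℝ)+1)⁻¹ := by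
        rw [hkey, ← map_sub]
        calc ‖F0 (W n - Tmap (W n))‖ = ε * ‖f (W n - Tmap (W n))‖ := hF0norm _
          _ ≤ ε * (‖f‖ * ‖W n - Tmap (W n)‖) :=
              mul_le_mul_of_nonneg_left (f.le_opNorm _) (le_of_lt hεpos)
          _ = ε * (‖f‖ * (2 * ((n:ℝ)+1)⁻¹)) := by rw [norm_W_sub_T]
          _ = 2 * ε * ‖f‖ * ((n:ℝ)+1)⁻¹ := by ring
      exact le_trans (csInf_le hbdd ⟨F0 (W n), hW, rfl⟩) hval
    have htend : Tendsto (fun n : ℕ => 2 * ε * ‖f‖ * ((n:ℝ)+1)⁻¹) atTop (𝓝 0) := by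
      have h1 : Tendsto (fun n : ℕ => ((n:ℝ)+1)⁻¹) atTop (𝓝 0) :=
        tendsto_one_div_add_atTop_nhds_zero_nat.congr (fun n => by rw [one_div])
      have := h1.const_mul (2 * ε * ‖f‖)
      simpa using this
    have hle : sInf S ≤ 0 := ge_of_tendsto' htend hupper
    have hge : 0 ≤ sInf S := le_csInf hSne hSlb
    linarith
  exact ⟨K, hKne, (Metric.isBounded_closedBall).subset hKsub, hKclosed, hKconvex, hKsub,
    ⟨R, hRmaps, hRid, ⟨2 * ‖f‖ * (c⁻¹ * ‖P‖), by positivity,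
      fun y _ z _ => hRlip y z⟩⟩,
    ⟨F, hFmaps, hFne, ⟨2 * ‖f‖ * c⁻¹, by positivity, hFlip⟩, hsinf⟩⟩
end
end

section
/- Let X be a real Banach space with a spreading Schauder basis. Then for every ε ∈ (0,1) there exists a fixed-point-free (1+ε)-Lipschitz map T : B_X → B_X with d(T,B_X) = 0. -/
open Metric Set Filter Topology

set_option maxHeartbeats 1000000

/-- Let `X` be a real Banach space with a spreading Schauder basis.  Then
for every `ε ∈ (0,1)` there exists a fixed-point-free `(1+ε)`-Lipschitz map
`T : B_X → B_X` with `d(T, B_X) = 0`. -/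
theorem statement13 {X : Type*} [NormedAddCommGroup X] [NormedSpace ℝ X] [CompleteSpace X]
    (x : ℕ → X)
    (hbasis : ∀ y : X, ∃! a : ℕ → ℝ,
      Filter.Tendsto (fun N : ℕ => ∑ i ∈ Finset.range N, a i • x i)
        Filter.atTop (nhds y))
    (hspread : ∀ φ : ℕ → ℕ, StrictMono φ → ∃ A B : ℝ, 0 < A ∧ 0 < B ∧
      ∀ (s : Finset ℕ) (a : ℕ → ℝ),
        A * ‖∑ n ∈ s, a n • x n‖ ≤ ‖∑ n ∈ s, a n • x (φ n)‖ ∧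
        ‖∑ n ∈ s, a n • x (φ n)‖ ≤ B * ‖∑ n ∈ s, a n • x n‖)
    (ε : ℝ) (hε : ε ∈ Set.Ioo (0 : ℝ) 1) :
    ∃ T : X → X,
      Set.MapsTo T (Metric.closedBall (0 : X) 1) (Metric.closedBall (0 : X) 1) ∧
      (∀ y ∈ Metric.closedBall (0 : X) 1, T y ≠ y) ∧
      (∀ y ∈ Metric.closedBall (0 : X) 1, ∀ z ∈ Metric.closedBall (0 : X) 1,
        ‖T y - T z‖ ≤ (1 + ε) * ‖y - z‖) ∧
      sInf ((fun y => ‖y - T y‖) '' Metric.closedBall (0 : X) 1) = 0 := by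
  classical
  obtain ⟨hε0, hε1⟩ := hε
  choose co hco using fun y => (hbasis y).exists
  have huniq : ∀ {y : X} {b : ℕ → ℝ},
      Tendsto (fun N : ℕ => ∑ i ∈ Finset.range N, b i • x i) atTop (𝓝 y) → b = co y :=
    fun {y b} h => (hbasis y).unique h (hco y)
  obtain ⟨A₁, B₁, hA₁, hB₁, hsp⟩ := hspread (fun n => n + 1)
    (fun a b h => Nat.add_lt_add_right h 1)
  -- Cauchy property of shifted partial sums
  have hQc : ∀ y : X, CauchySeq (fun N : ℕ => ∑ i ∈ Finset.range N, co y i • x (i+1)) := by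
    intro y
    have hP : CauchySeq (fun N : ℕ => ∑ i ∈ Finset.range N, co y i • x i) := (hco y).cauchySeq
    rw [Metric.cauchySeq_iff'] at hP ⊢
    intro η hη
    obtain ⟨N, hN⟩ := hP (η / (B₁ + 1)) (by positivity)
    refine ⟨N, fun n hn => ?_⟩
    have key : dist (∑ i ∈ Finset.range n, co y i • x (i+1))
        (∑ i ∈ Finset.range N, co y i • x (i+1))
          ≤ B₁ * dist (∑ i ∈ Finset.range n, co y i • x i)
            (∑ i ∈ Finset.range N, co y i • x i) := by
      rw [dist_eq_norm, dist_eq_norm, ← Finset.sum_Ico_eq_sub _ hn,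
        ← Finset.sum_Ico_eq_sub _ hn]
      exact (hsp (Finset.Ico N n) (co y)).2
    have h2 := hN n hn
    have h3 : B₁ * dist (∑ i ∈ Finset.range n, co y i • x i)
        (∑ i ∈ Finset.range N, co y i • x i) < B₁ * (η / (B₁ + 1)) :=
      (mul_lt_mul_iff_right₀ hB₁).mpr h2
    have h4 : B₁ * (η / (B₁ + 1)) < η := by
      rw [mul_div_assoc']
      rw [div_lt_iff₀ (by linarith)]
      nlinarith
    exact lt_of_le_of_lt key (lt_trans h3 h4)
  choose U hU using fun y => cauchySeq_tendsto_of_complete (hQc y)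
  -- coefficient algebra
  have hco_add : ∀ y z : X, (fun n => co y n + co z n) = co (y + z) := by
    intro y z
    refine huniq (((hco y).add (hco z)).congr fun N => ?_)
    rw [← Finset.sum_add_distrib]
    exact Finset.sum_congr rfl fun i _ => (add_smul _ _ _).symm
  have hco_smul : ∀ (c : ℝ) (y : X), (fun n => c * co y n) = co (c • y) := by
    intro c y
    refine huniq (((hco y).const_smul c).congr fun N => ?_)
    rw [Finset.smul_sum]
    exact Finset.sum_congr rfl fun i _ => (mul_smul _ _ _).symm
  -- U is additive / homogeneous
  have hUadd : ∀ y z : X, U (y + z) = U y + U z := by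
    intro y z
    refine tendsto_nhds_unique (hU (y + z)) (((hU y).add (hU z)).congr fun N => ?_)
    rw [← Finset.sum_add_distrib]
    refine Finset.sum_congr rfl fun i _ => ?_
    rw [← congrFun (hco_add y z) i, add_smul]
  have hUsmul : ∀ (c : ℝ) (y : X), U (c • y) = c • U y := by
    intro c y
    refine tendsto_nhds_unique (hU (c • y)) (((hU y).const_smul c).congr fun N => ?_)
    rw [Finset.smul_sum]
    refine Finset.sum_congr rfl fun i _ => ?_
    rw [← congrFun (hco_smul c y) i, mul_smul]
  have hUzero : U 0 = 0 := by
    have h := hUadd 0 0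
    rw [add_zero] at h
    exact (left_eq_add.mp h)
  have hUsub : ∀ y z : X, U (y - z) = U y - U z := by
    intro y z
    have hneg : U (-z) = -U z := by
      have := hUsmul (-1) z
      simpa using this
    rw [sub_eq_add_neg, sub_eq_add_neg, hUadd, hneg]
  have hUnorm : ∀ y : X, ‖U y‖ ≤ B₁ * ‖y‖ := by
    intro y
    refine le_of_tendsto_of_tendsto' (hU y).norm ((hco y).norm.const_mul B₁)
      fun N => (hsp (Finset.range N) (co y)).2
  -- coefficients of basis vectors
  have hcox : ∀ k : ℕ, (fun i => if i = k then (1:ℝ) else 0) = co (x k) := by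
    intro k
    refine huniq ?_
    have hev : ∀ N : ℕ, N ≥ k + 1 →
        (∑ i ∈ Finset.range N, (if i = k then (1:ℝ) else 0) • x i) = x k := by
      intro N hN
      have : ∀ i, ((if i = k then (1:ℝ) else 0) • x i) = (if i = k then x i else 0) := by
        intro i; split <;> simp
      rw [Finset.sum_congr rfl fun i _ => this i, Finset.sum_ite_eq' (Finset.range N) k]
      rw [if_pos (Finset.mem_range.mpr (by omega))]
    refine (tendsto_const_nhds : Tendsto (fun _ : ℕ => x k) atTop (𝓝 (x k))).congr'  ?_
    filter_upwards [eventually_ge_atTop (k+1)] with N hN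
    exact (hev N hN).symm
  have hUx : ∀ k : ℕ, U (x k) = x (k+1) := by
    intro k
    refine tendsto_nhds_unique (hU (x k)) ?_
    have hev : ∀ N : ℕ, N ≥ k + 1 →
        (∑ i ∈ Finset.range N, co (x k) i • x (i+1)) = x (k+1) := by
      intro N hN
      have e1 : ∀ i, co (x k) i • x (i+1) = (if i = k then x (i+1) else 0) := by
        intro i
        rw [← congrFun (hcox k) i]
        by_cases h : i = k <;> simp [h]
      rw [Finset.sum_congr rfl fun i _ => e1 i, Finset.sum_ite_eq' (Finset.range N) k]
      rw [if_pos (Finset.mem_range.mpr (by omega))]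
    refine (tendsto_const_nhds : Tendsto (fun _ : ℕ => x (k+1)) atTop (𝓝 (x (k+1)))).congr' ?_
    filter_upwards [eventually_ge_atTop (k+1)] with N hN
    exact (hev N hN).symm
  -- coefficients of U y  (shifted coefficients)
  have hcoU : ∀ y : X, (fun n : ℕ => if n = 0 then (0:ℝ) else co y (n-1)) = co (U y) := by
    intro y
    refine huniq ?_
    have hstep : ∀ N : ℕ, (∑ i ∈ Finset.range (N+1),
        (if i = 0 then (0:ℝ) else co y (i-1)) • x i)
          = ∑ i ∈ Finset.range N, co y i • x (i+1) := by
      intro N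
      rw [Finset.sum_range_succ']
      simp
    rw [← tendsto_add_atTop_iff_nat 1]
    exact (hU y).congr fun N => (hstep N).symm
  -- eigenvector-free
  have halpha : ∀ c : ℝ, 0 < c → ∀ y : X, U y = c • y → y = 0 := by
    intro c hc y hEq
    have h1 : co (U y) = co (c • y) := by rw [hEq]
    have hkey : ∀ n, (if n = 0 then (0:ℝ) else co y (n-1)) = c * co y n := by
      intro n
      rw [congrFun (hcoU y) n, h1, ← congrFun (hco_smul c y) n]
    have hzero : ∀ n, co y n = 0 := by
      intro n
      induction n with
      | zero =>
        have h0 := hkey 0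
        simp at h0
        rcases h0 with h0 | h0
        · exact absurd h0 hc.ne'
        · exact h0
      | succ m ih =>
        have h0 := hkey (m+1)
        simp [ih] at h0
        rcases h0 with h0 | h0
        · exact absurd h0 hc.ne'
        · exact h0
    have hzt : Tendsto (fun N : ℕ => ∑ i ∈ Finset.range N, co y i • x i) atTop (𝓝 (0:X)) := by
      refine (tendsto_const_nhds : Tendsto (fun _ : ℕ => (0:X)) atTop (𝓝 0)).congr fun N => ?_
      rw [Finset.sum_eq_zero]
      intro i _
      rw [hzero i, zero_smul]
    exact (tendsto_nhds_unique (hco y) hzt)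
  -- norms of basis vectors: no subsequence tending to 0, and bounded above
  have hxne : ∀ n, x n ≠ 0 := by
    intro n hn
    have h1 : Tendsto (fun N : ℕ => ∑ i ∈ Finset.range N,
        (fun i => if i = n then (1:ℝ) else 0) i • x i) atTop (𝓝 (0:X)) := by
      have hz : ∀ N : ℕ, (∑ i ∈ Finset.range N,
          (fun i => if i = n then (1:ℝ) else 0) i • x i) = 0 := by
        intro N
        refine Finset.sum_eq_zero fun i _ => ?_
        by_cases h : i = n
        · subst h; rw [hn, smul_zero]
        · simp [h]
      exact (tendsto_const_nhds : Tendsto (fun _ : ℕ => (0:X)) atTop (𝓝 0)).congr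
        fun N => (hz N).symm
    have h2 : Tendsto (fun N : ℕ => ∑ i ∈ Finset.range N,
        (fun _ : ℕ => (0:ℝ)) i • x i) atTop (𝓝 (0:X)) := by
      simp only [zero_smul, Finset.sum_const_zero]
      exact (tendsto_const_nhds : Tendsto (fun _ : ℕ => (0:X)) atTop (𝓝 0))
    have e1 := huniq h1
    have e2 := huniq h2
    have e3 := congrFun (e1.trans e2.symm) n
    simp at e3
  have hxpos : ∀ n, (0:ℝ) < ‖x n‖ := fun n => norm_pos_iff.mpr (hxne n)
  have hsmall : (∀ (m : ℕ) (c : ℝ), 0 < c → ∃ n, m < n ∧ ‖x n‖ < c) → False := by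
    intro h
    let φ : ℕ → ℕ := fun k => Nat.rec 0
      (fun k ih => (h ih (‖x (k+1)‖ / ((k:ℝ)+2)) (div_pos (norm_pos_iff.mpr (hxne (k+1))) (by positivity))).choose) k
    have hφspec : ∀ k : ℕ, φ k < φ (k+1) ∧ ‖x (φ (k+1))‖ < ‖x (k+1)‖ / ((k:ℝ)+2) := fun k =>
      (h (φ k) (‖x (k+1)‖ / ((k:ℝ)+2)) (div_pos (norm_pos_iff.mpr (hxne (k+1))) (by positivity))).choose_spec
    have hφmono : StrictMono φ := strictMono_nat_of_lt_succ fun k => (hφspec k).1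
    obtain ⟨A, B, hA, hB, hs⟩ := hspread φ hφmono
    obtain ⟨k, hk⟩ := exists_nat_gt (1 / A)
    have h1 := (hs {k+1} (fun _ => (1:ℝ))).1
    simp only [Finset.sum_singleton, one_smul] at h1
    have h3 : A * ‖x (k+1)‖ < ‖x (k+1)‖ / ((k:ℝ)+2) := lt_of_le_of_lt h1 (hφspec k).2
    have h4 : A < 1 / ((k:ℝ)+2) := by
      have hp := hxpos (k+1)
      rw [div_eq_mul_one_div ‖x (k+1)‖ (((k:ℝ))+2),
        mul_comm ‖x (k+1)‖ (1/((k:ℝ)+2))] at h3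
      exact lt_of_mul_lt_mul_right h3 hp.le
    have h5 : ((k:ℝ)+2) < 1 / A := by
      rw [lt_div_iff₀ hA]
      rw [div_eq_mul_one_div, one_mul] at h4
      calc ((k:ℝ)+2) * A < ((k:ℝ)+2) * (1/((k:ℝ)+2)) := by
            exact (mul_lt_mul_iff_right₀ (by positivity)).mpr h4
        _ = 1 := by field_simp
    linarith
  have hbig : (∀ (m : ℕ) (c : ℝ), ∃ n, m < n ∧ c < ‖x n‖) → False := by
    intro h
    let φ : ℕ → ℕ := fun k => Nat.rec 0
      (fun k ih => (h ih (((k:ℝ)+2) * ‖x (k+1)‖)).choose) k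
    have hφspec : ∀ k : ℕ, φ k < φ (k+1) ∧ ((k:ℝ)+2) * ‖x (k+1)‖ < ‖x (φ (k+1))‖ := fun k =>
      (h (φ k) (((k:ℝ)+2) * ‖x (k+1)‖)).choose_spec
    have hφmono : StrictMono φ := strictMono_nat_of_lt_succ fun k => (hφspec k).1
    obtain ⟨A, B, hA, hB, hs⟩ := hspread φ hφmono
    obtain ⟨k, hk⟩ := exists_nat_gt B
    have h1 := (hs {k+1} (fun _ => (1:ℝ))).2
    simp only [Finset.sum_singleton, one_smul] at h1
    have h3 : ((k:ℝ)+2) * ‖x (k+1)‖ < B * ‖x (k+1)‖ := lt_of_lt_of_le (hφspec k).2 h1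
    have h4 : ((k:ℝ)+2) < B := lt_of_mul_lt_mul_right h3 (hxpos (k+1)).le
    linarith
  obtain ⟨M₂, hM₂⟩ : ∃ M : ℝ, ∀ n, ‖x n‖ ≤ M := by
    by_contra hcon
    push_neg at hcon
    apply hbig
    intro m c
    obtain ⟨Mf, hMf⟩ := Finset.exists_le ((Finset.range (m+1)).image fun n => ‖x n‖)
    obtain ⟨n, hn⟩ := hcon (max c Mf)
    refine ⟨n, ?_, lt_of_le_of_lt (le_max_left _ _) hn⟩
    by_contra hnm
    push_neg at hnm
    have hmem : ‖x n‖ ∈ (Finset.range (m+1)).image fun n => ‖x n‖ :=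
      Finset.mem_image_of_mem _ (Finset.mem_range.mpr (by omega))
    have := lt_of_le_of_lt (le_max_right c Mf) hn
    have := hMf _ hmem
    linarith
  -- the series ∑ x n does not converge
  have hnosum : ∀ z : X, ¬ Tendsto (fun N : ℕ => ∑ i ∈ Finset.range N, x i) atTop (𝓝 z) := by
    intro z hz
    apply hsmall
    intro m c hc
    have hx0 : Tendsto (fun N : ℕ => x N) atTop (𝓝 (0:X)) := by
      have h1 : Tendsto (fun N : ℕ => (∑ i ∈ Finset.range (N+1), x i)
          - ∑ i ∈ Finset.range N, x i) atTop (𝓝 (z - z)) :=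
        ((tendsto_add_atTop_iff_nat 1).mpr hz).sub hz
      rw [sub_self] at h1
      refine h1.congr fun N => ?_
      rw [Finset.sum_range_succ]
      abel
    have h2 : ∀ᶠ n : ℕ in atTop, ‖x n‖ < c := by
      have h0 := hx0.norm
      rw [norm_zero] at h0
      exact h0.eventually (eventually_lt_nhds hc)
    have h3 := (h2.and (eventually_gt_atTop m)).exists
    obtain ⟨n, hn1, hn2⟩ := h3
    exact ⟨n, hn2, hn1⟩
  have hco_sub : ∀ y z : X, (fun n => co y n - co z n) = co (y - z) := by
    intro y z
    refine huniq (((hco y).sub (hco z)).congr fun N => ?_)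
    rw [← Finset.sum_sub_distrib]
    exact Finset.sum_congr rfl fun i _ => (sub_smul _ _ _).symm
  -- x 0 is not in the positive ray of the range of (I - U)
  have hbeta : ∀ (y : X) (s : ℝ), 0 < s → y - U y = s • x 0 → False := by
    intro y s hs hEq
    have h1 : co (y - U y) = co (s • x 0) := by rw [hEq]
    have hkey : ∀ n, co y n - (if n = 0 then (0:ℝ) else co y (n-1))
        = s * (if n = 0 then (1:ℝ) else 0) := by
      intro n
      rw [congrFun (hcoU y) n, congrFun (hco_sub y (U y)) n, h1,
        ← congrFun (hco_smul s (x 0)) n, ← congrFun (hcox 0) n]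
    have hconst : ∀ n, co y n = s := by
      intro n
      induction n with
      | zero =>
        have h0 := hkey 0
        simpa using h0
      | succ m ih =>
        have h0 := hkey (m+1)
        simp at h0
        rw [sub_eq_zero] at h0
        rw [h0, ih]
    have hten : Tendsto (fun N : ℕ => s • ∑ i ∈ Finset.range N, x i) atTop (𝓝 y) := by
      refine (hco y).congr fun N => ?_
      rw [Finset.smul_sum]
      exact Finset.sum_congr rfl fun i _ => by rw [hconst i]
    have hσten : Tendsto (fun N : ℕ => ∑ i ∈ Finset.range N, x i) atTop (𝓝 (s⁻¹ • y)) := by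
      have := hten.const_smul s⁻¹
      refine this.congr fun N => ?_
      rw [smul_smul, inv_mul_cancel₀ hs.ne', one_smul]
    exact hnosum _ hσten
  -- radial retraction
  set rr : X → X := fun z => (max 1 ‖z‖)⁻¹ • z with hrrdef
  have hm1 : ∀ z : X, (0:ℝ) < max 1 ‖z‖ := fun z => lt_of_lt_of_le one_pos (le_max_left _ _)
  have hrr_norm : ∀ z : X, ‖rr z‖ ≤ 1 := by
    intro z
    rw [hrrdef]
    simp only []
    rw [norm_smul, Real.norm_eq_abs, abs_inv, abs_of_pos (hm1 z)]
    rw [inv_mul_le_iff₀ (hm1 z), mul_one]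
    exact le_max_right 1 ‖z‖
  have hrr_id : ∀ z : X, ‖z‖ ≤ 1 → rr z = z := by
    intro z hz
    rw [hrrdef]
    simp only []
    rw [max_eq_left hz, inv_one, one_smul]
  have hrr_near : ∀ (z y : X), ‖y‖ ≤ 1 → ‖rr z - y‖ ≤ 2 * ‖z - y‖ := by
    intro z y hy
    rcases le_or_gt ‖z‖ 1 with h | h
    · rw [hrr_id z h]
      linarith [norm_nonneg (z - y)]
    · have hmz : max 1 ‖z‖ = ‖z‖ := max_eq_right h.le
      have h1 : ‖rr z - z‖ = ‖z‖ - 1 := by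
        have hd : rr z - z = (‖z‖⁻¹ - 1) • z := by
          rw [hrrdef]
          simp only []
          rw [hmz, sub_smul, one_smul]
        rw [hd, norm_smul, Real.norm_eq_abs]
        rw [abs_of_nonpos (by
          have : ‖z‖⁻¹ ≤ 1 := by
            rw [inv_le_one_iff₀]
            right; exact h.le
          linarith)]
        have hzne : ‖z‖ ≠ 0 := by positivity
        field_simp
        ring
      have h2 : ‖z‖ - 1 ≤ ‖z - y‖ := by
        have := norm_sub_norm_le z y
        linarith
      calc ‖rr z - y‖ ≤ ‖rr z - z‖ + ‖z - y‖ := by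
            have := norm_add_le (rr z - z) (z - y)
            simpa [sub_add_sub_cancel] using this
        _ ≤ 2 * ‖z - y‖ := by rw [h1]; linarith
  have hrr_lip : ∀ u v : X, ‖rr u - rr v‖ ≤ 2 * ‖u - v‖ := by
    have key : ∀ u v : X, max 1 ‖v‖ ≤ max 1 ‖u‖ → ‖rr u - rr v‖ ≤ 2 * ‖u - v‖ := by
      intro u v hba
      have ha := hm1 u
      have hb := hm1 v
      have ha1 : (1:ℝ) ≤ max 1 ‖u‖ := le_max_left _ _
      have hdecomp : rr u - rr v = (max 1 ‖u‖)⁻¹ • (u - v)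
          + ((max 1 ‖u‖)⁻¹ - (max 1 ‖v‖)⁻¹) • v := by
        rw [hrrdef]
        simp only []
        rw [smul_sub, sub_smul]
        abel
      have hmax : max 1 ‖u‖ - max 1 ‖v‖ ≤ ‖u - v‖ := by
        have h1 : |max ‖u‖ 1 - max ‖v‖ 1| ≤ |‖u‖ - ‖v‖| := abs_max_sub_max_le_abs _ _ _
        have h2 : |‖u‖ - ‖v‖| ≤ ‖u - v‖ := abs_norm_sub_norm_le u v
        rw [max_comm 1 ‖u‖, max_comm 1 ‖v‖]
        calc max ‖u‖ 1 - max ‖v‖ 1 ≤ |max ‖u‖ 1 - max ‖v‖ 1| := le_abs_self _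
          _ ≤ ‖u - v‖ := le_trans h1 h2
      have e1 : ‖(max 1 ‖u‖)⁻¹ • (u - v)‖ ≤ ‖u - v‖ := by
        rw [norm_smul, Real.norm_eq_abs, abs_inv, abs_of_pos ha]
        have : (max 1 ‖u‖)⁻¹ ≤ 1 := by
          rw [inv_le_one_iff₀]; right; exact ha1
        nlinarith [norm_nonneg (u - v)]
      have e2 : ‖((max 1 ‖u‖)⁻¹ - (max 1 ‖v‖)⁻¹) • v‖ ≤ ‖u - v‖ := by
        rw [norm_smul, Real.norm_eq_abs]
        have hinv : (max 1 ‖u‖)⁻¹ ≤ (max 1 ‖v‖)⁻¹ := by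
          exact inv_anti₀ hb hba
        rw [abs_of_nonpos (by linarith)]
        have hv : ‖v‖ ≤ max 1 ‖v‖ := le_max_right _ _
        have hstep : ((max 1 ‖v‖)⁻¹ - (max 1 ‖u‖)⁻¹) * ‖v‖
            ≤ ((max 1 ‖v‖)⁻¹ - (max 1 ‖u‖)⁻¹) * max 1 ‖v‖ :=
          mul_le_mul_of_nonneg_left hv (by linarith)
        have hstep2 : ((max 1 ‖v‖)⁻¹ - (max 1 ‖u‖)⁻¹) * max 1 ‖v‖
            = (max 1 ‖u‖ - max 1 ‖v‖) / max 1 ‖u‖ := by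
          field_simp
        have hstep3 : (max 1 ‖u‖ - max 1 ‖v‖) / max 1 ‖u‖ ≤ max 1 ‖u‖ - max 1 ‖v‖ :=
          div_le_self (by linarith) ha1
        have : -((max 1 ‖u‖)⁻¹ - (max 1 ‖v‖)⁻¹) = (max 1 ‖v‖)⁻¹ - (max 1 ‖u‖)⁻¹ := by ring
        rw [this]
        calc ((max 1 ‖v‖)⁻¹ - (max 1 ‖u‖)⁻¹) * ‖v‖
            ≤ (max 1 ‖u‖ - max 1 ‖v‖) / max 1 ‖u‖ := by rw [← hstep2]; exact hstep
          _ ≤ max 1 ‖u‖ - max 1 ‖v‖ := hstep3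
          _ ≤ ‖u - v‖ := hmax
      calc ‖rr u - rr v‖ = ‖(max 1 ‖u‖)⁻¹ • (u - v)
            + ((max 1 ‖u‖)⁻¹ - (max 1 ‖v‖)⁻¹) • v‖ := by rw [hdecomp]
        _ ≤ ‖(max 1 ‖u‖)⁻¹ • (u - v)‖ + ‖((max 1 ‖u‖)⁻¹ - (max 1 ‖v‖)⁻¹) • v‖ :=
            norm_add_le _ _
        _ ≤ 2 * ‖u - v‖ := by linarith
    intro u v
    rcases le_total (max 1 ‖v‖) (max 1 ‖u‖) with h | h
    · exact key u v h
    · rw [norm_sub_rev, norm_sub_rev u v]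
      exact key v u h
  -- the drift vector and the map G
  have hx0pos : (0:ℝ) < ‖x 0‖ := hxpos 0
  set w : X := ‖x 0‖⁻¹ • x 0 with hwdef
  have hwnorm : ‖w‖ = 1 := by
    rw [hwdef, norm_smul, Real.norm_eq_abs, abs_inv, abs_norm]
    field_simp
  set G : X → X := fun y => rr (U y + (1 - ‖y‖) • w) with hGdef
  -- G is fixed-point free on the unit ball
  have hGfpf : ∀ y : X, ‖y‖ ≤ 1 → G y ≠ y := by
    intro y hy hGy
    rw [hGdef] at hGy
    simp only [] at hGy
    set z : X := U y + (1 - ‖y‖) • w with hzdef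
    rcases le_or_gt ‖z‖ 1 with hz1 | hz1
    · have hzy : z = y := by rw [← hrr_id z hz1]; exact hGy
      rcases eq_or_lt_of_le hy with hy1 | hy1
      · -- ‖y‖ = 1
        have hzU : z = U y := by
          rw [hzdef, ← hy1, sub_self, zero_smul, add_zero]
        have hUyy : U y = (1:ℝ) • y := by rw [one_smul, ← hzU, hzy]
        have hy0 := halpha 1 one_pos y hUyy
        rw [hy0, norm_zero] at hy1
        exact absurd hy1.symm one_ne_zero
      · -- ‖y‖ < 1
        have h4 : y - U y = ((1 - ‖y‖) * ‖x 0‖⁻¹) • x 0 := by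
          have hthis : y = U y + (1 - ‖y‖) • w := by rw [← hzdef, hzy]
          rw [hwdef, smul_smul] at hthis
          rw [sub_eq_iff_eq_add, add_comm]
          exact hthis
        exact hbeta y _ (mul_pos (by linarith) (inv_pos.mpr hx0pos)) h4
    · have hmz : max 1 ‖z‖ = ‖z‖ := max_eq_right hz1.le
      have hzpos : (0:ℝ) < ‖z‖ := lt_trans one_pos hz1
      have hyz : y = ‖z‖⁻¹ • z := by
        rw [← hGy, hrrdef]
        simp only []
        rw [hmz]
      have hyn : ‖y‖ = 1 := by
        rw [hyz, norm_smul, Real.norm_eq_abs, abs_inv, abs_norm]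
        field_simp
      have hzU : z = U y := by
        rw [hzdef, hyn, sub_self, zero_smul, add_zero]
      have hUyy : U y = ‖z‖ • y := by
        rw [← hzU, hyz, smul_smul, mul_inv_cancel₀ hzpos.ne', one_smul]
      have hy0 := halpha ‖z‖ hzpos y hUyy
      rw [hy0, norm_zero] at hyn
      exact absurd hyn.symm one_ne_zero
  -- G is Lipschitz with constant 2*(B₁+1)
  have hGlip : ∀ u v : X, ‖G u - G v‖ ≤ (2*(B₁+1)) * ‖u - v‖ := by
    intro u v
    have hd : (U u + (1 - ‖u‖) • w) - (U v + (1 - ‖v‖) • w)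
        = U (u - v) + (‖v‖ - ‖u‖) • w := by
      rw [hUsub, sub_smul, sub_smul]
      module
    have h1 : ‖(U u + (1 - ‖u‖) • w) - (U v + (1 - ‖v‖) • w)‖ ≤ (B₁ + 1) * ‖u - v‖ := by
      rw [hd]
      refine le_trans (norm_add_le _ _) ?_
      have e1 : ‖U (u - v)‖ ≤ B₁ * ‖u - v‖ := hUnorm _
      have e2 : ‖(‖v‖ - ‖u‖) • w‖ ≤ ‖u - v‖ := by
        rw [norm_smul, hwnorm, mul_one, Real.norm_eq_abs, abs_sub_comm]
        exact abs_norm_sub_norm_le u v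
      linarith
    calc ‖G u - G v‖ ≤ 2 * ‖(U u + (1 - ‖u‖) • w) - (U v + (1 - ‖v‖) • w)‖ := by
          rw [hGdef]
          exact hrr_lip _ _
      _ ≤ (2*(B₁+1)) * ‖u - v‖ := by nlinarith [norm_nonneg ((U u + (1 - ‖u‖) • w) - (U v + (1 - ‖v‖) • w))]
  -- partial sums of the basis and their Cesàro averages
  set Sig : ℕ → X := fun N => ∑ i ∈ Finset.range N, x i with hSigdef
  have hSig0 : Sig 0 = 0 := by rw [hSigdef]; simp
  have hSigS : ∀ N : ℕ, Sig (N+1) = Sig N + x N := by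
    intro N
    rw [hSigdef]
    simp only []
    rw [Finset.sum_range_succ]
  have hUSig : ∀ N : ℕ, U (Sig N) = Sig (N+1) - x 0 := by
    intro N
    induction N with
    | zero =>
      rw [hSig0, hUzero, hSigS 0, hSig0]
      abel
    | succ n ih =>
      rw [hSigS n, hUadd, ih, hUx, hSigS (n+1)]
      abel
  set AN : ℕ → X := fun N => ((N:ℝ))⁻¹ • ∑ k ∈ Finset.range N, Sig k with hANdef
  have hUsumSig : ∀ N : ℕ, U (∑ k ∈ Finset.range N, Sig k)
      = ∑ k ∈ Finset.range N, U (Sig k) := by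
    intro N
    induction N with
    | zero => simpa using hUzero
    | succ n ih =>
      rw [Finset.sum_range_succ, hUadd, ih, Finset.sum_range_succ]
  have hUA : ∀ N : ℕ, 1 ≤ N → U (AN N) = AN N + ((N:ℝ))⁻¹ • Sig N - x 0 := by
    intro N hN1
    have hNcast : ((N:ℝ)) ≠ 0 := Nat.cast_ne_zero.mpr (by omega)
    rw [hANdef]
    simp only []
    rw [hUsmul, hUsumSig]
    have h1 : (∑ k ∈ Finset.range N, U (Sig k))
        = (∑ k ∈ Finset.range N, Sig (k+1)) - (N:ℝ) • x 0 := by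
      rw [Finset.sum_congr rfl fun k _ => hUSig k, Finset.sum_sub_distrib,
        Finset.sum_const, Finset.card_range]
      rw [Nat.cast_smul_eq_nsmul ℝ N (x 0)]
    have h2 : (∑ k ∈ Finset.range N, Sig (k+1))
        = (∑ k ∈ Finset.range N, Sig k) + Sig N := by
      have hkey := Finset.sum_range_succ' Sig N
      rw [Finset.sum_range_succ, hSig0, add_zero] at hkey
      exact hkey.symm
    rw [h1, h2]
    rw [smul_sub, smul_add, smul_smul, inv_mul_cancel₀ hNcast, one_smul]
  -- displacement points
  have hM₂0 : (0:ℝ) ≤ M₂ := le_trans (norm_nonneg _) (hM₂ 0)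
  have hGbound : ∀ y : X, ‖y‖ ≤ 1 → ‖G y - y‖ ≤ 2 * ‖(U y + (1 - ‖y‖) • w) - y‖ := by
    intro y hy
    rw [hGdef]
    exact hrr_near _ y hy
  have hdisp : ∀ n : ℕ, ∃ y : X, ‖y‖ ≤ 1 ∧
      ‖G y - y‖ ≤ (2*‖x 0‖⁻¹ + 2*(M₂ + ‖x 0‖)) / ((n:ℝ)+1) := by
    intro n
    set N : ℕ := (n+1)^2 with hNdef
    have hN1 : 1 ≤ N := Nat.one_le_iff_ne_zero.mpr (by positivity)
    have hNcast : ((N:ℝ)) = ((n:ℝ)+1)^2 := by rw [hNdef]; push_cast; ring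
    have hn1pos : (0:ℝ) < (n:ℝ)+1 := by positivity
    have hNpos : (0:ℝ) < (N:ℝ) := by rw [hNcast]; positivity
    rcases le_or_gt ‖Sig N‖ ((n:ℝ)+1) with hc | hc
    · -- Cesàro case
      set ρ : ℝ := ‖AN N‖ + ‖x 0‖ with hρdef
      have hρ : (0:ℝ) < ρ := add_pos_of_nonneg_of_pos (norm_nonneg _) hx0pos
      set y : X := ρ⁻¹ • AN N with hydef
      have hyn : ‖y‖ = ρ⁻¹ * ‖AN N‖ := by
        rw [hydef, norm_smul, Real.norm_eq_abs, abs_inv, abs_of_pos hρ]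
      have hy1 : ‖y‖ ≤ 1 := by
        rw [hyn, inv_mul_le_iff₀ hρ, mul_one]
        linarith [norm_nonneg (AN N), hx0pos]
      refine ⟨y, hy1, ?_⟩
      have hcs : 1 - ‖y‖ = ρ⁻¹ * ‖x 0‖ := by
        rw [hyn]
        field_simp
        rw [hρdef]
        ring
      have hcoef : (1 - ‖y‖) • w = ρ⁻¹ • x 0 := by
        rw [hcs, hwdef, smul_smul, mul_assoc, mul_inv_cancel₀ hx0pos.ne', mul_one]
      have hz : (U y + (1 - ‖y‖) • w) - y = (ρ⁻¹ * ((N:ℝ))⁻¹) • Sig N := by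
        rw [hcoef, hydef, hUsmul, hUA N hN1]
        rw [smul_sub, smul_add, smul_smul]
        module
      have hznorm : ‖(U y + (1 - ‖y‖) • w) - y‖ = ρ⁻¹ * ((N:ℝ))⁻¹ * ‖Sig N‖ := by
        rw [hz, norm_smul, Real.norm_eq_abs,
          abs_of_pos (mul_pos (inv_pos.mpr hρ) (inv_pos.mpr hNpos))]
      have hb1 : ρ⁻¹ ≤ ‖x 0‖⁻¹ := by
        apply inv_anti₀ hx0pos
        rw [hρdef]
        linarith [norm_nonneg (AN N)]
      have hb2 : ((N:ℝ))⁻¹ * ‖Sig N‖ ≤ 1/((n:ℝ)+1) := by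
        rw [hNcast]
        rw [inv_mul_le_iff₀ (by positivity)]
        calc ‖Sig N‖ ≤ (n:ℝ)+1 := hc
          _ = (((n:ℝ)+1)^2) * (1/((n:ℝ)+1)) := by field_simp
      have hfin : ‖(U y + (1 - ‖y‖) • w) - y‖ ≤ ‖x 0‖⁻¹ * (1/((n:ℝ)+1)) := by
        rw [hznorm, mul_assoc]
        apply mul_le_mul hb1 hb2 (by positivity) (by positivity)
      calc ‖G y - y‖ ≤ 2 * ‖(U y + (1 - ‖y‖) • w) - y‖ := hGbound y hy1
        _ ≤ 2 * (‖x 0‖⁻¹ * (1/((n:ℝ)+1))) := by linarith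
        _ ≤ (2*‖x 0‖⁻¹ + 2*(M₂ + ‖x 0‖)) / ((n:ℝ)+1) := by
            rw [div_eq_mul_one_div (2*‖x 0‖⁻¹ + 2*(M₂ + ‖x 0‖)) ((n:ℝ)+1), add_mul]
            have h0 : (0:ℝ) ≤ 2*(M₂ + ‖x 0‖) := by positivity
            have h1 : (0:ℝ) ≤ 1/((n:ℝ)+1) := by positivity
            have h2 : (0:ℝ) ≤ 2*(M₂ + ‖x 0‖) * (1/((n:ℝ)+1)) := mul_nonneg h0 h1
            have h3 : 2 * (‖x 0‖⁻¹ * (1/((n:ℝ)+1))) = 2*‖x 0‖⁻¹ * (1/((n:ℝ)+1)) := by ring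
            linarith
    · -- flat case
      have hσpos : (0:ℝ) < ‖Sig N‖ := lt_trans hn1pos hc
      set y : X := ‖Sig N‖⁻¹ • Sig N with hydef
      have hyn : ‖y‖ = 1 := by
        rw [hydef, norm_smul, Real.norm_eq_abs, abs_inv, abs_norm]
        field_simp
      refine ⟨y, le_of_eq hyn, ?_⟩
      have hz : (U y + (1 - ‖y‖) • w) - y = ‖Sig N‖⁻¹ • (x N - x 0) := by
        rw [hyn, sub_self, zero_smul, add_zero, hydef, hUsmul, hUSig, hSigS N]
        rw [← smul_sub]
        congr 1
        abel
      have hznorm : ‖(U y + (1 - ‖y‖) • w) - y‖ ≤ ‖Sig N‖⁻¹ * (M₂ + ‖x 0‖) := by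
        rw [hz, norm_smul, Real.norm_eq_abs, abs_inv, abs_norm]
        apply mul_le_mul_of_nonneg_left _ (by positivity)
        calc ‖x N - x 0‖ ≤ ‖x N‖ + ‖x 0‖ := norm_sub_le _ _
          _ ≤ M₂ + ‖x 0‖ := by linarith [hM₂ N]
      have hb1 : ‖Sig N‖⁻¹ ≤ 1/((n:ℝ)+1) := by
        rw [one_div]
        exact inv_anti₀ hn1pos hc.le
      calc ‖G y - y‖ ≤ 2 * ‖(U y + (1 - ‖y‖) • w) - y‖ := hGbound y (le_of_eq hyn)
        _ ≤ 2 * (‖Sig N‖⁻¹ * (M₂ + ‖x 0‖)) := by linarith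
        _ ≤ 2 * ((1/((n:ℝ)+1)) * (M₂ + ‖x 0‖)) := by
            have := mul_le_mul_of_nonneg_right hb1 (by positivity : (0:ℝ) ≤ M₂ + ‖x 0‖)
            linarith
        _ ≤ (2*‖x 0‖⁻¹ + 2*(M₂ + ‖x 0‖)) / ((n:ℝ)+1) := by
            rw [div_eq_mul_one_div (2*‖x 0‖⁻¹ + 2*(M₂ + ‖x 0‖)) ((n:ℝ)+1), add_mul]
            have h0 : (0:ℝ) ≤ 2*‖x 0‖⁻¹ := by positivity
            have h1 : (0:ℝ) ≤ 1/((n:ℝ)+1) := by positivity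
            have h2 : (0:ℝ) ≤ 2*‖x 0‖⁻¹ * (1/((n:ℝ)+1)) := mul_nonneg h0 h1
            have h3 : 2 * ((1/((n:ℝ)+1)) * (M₂ + ‖x 0‖)) = 2*(M₂ + ‖x 0‖) * (1/((n:ℝ)+1)) := by
              ring
            linarith
  -- assemble the map T
  set t : ℝ := ε / (2*(B₁+1)) with htdef
  have hLpos : (0:ℝ) < 2*(B₁+1) := by linarith
  have ht0 : 0 < t := div_pos hε0 hLpos
  have htL : t * (2*(B₁+1)) = ε := div_mul_cancel₀ ε hLpos.ne'
  have ht1 : t < 1 := by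
    rw [htdef, div_lt_one hLpos]
    linarith
  refine ⟨fun y => (1-t) • y + t • G y, ?_, ?_, ?_, ?_⟩
  · -- maps the ball into itself
    intro y hy
    show (1-t) • y + t • G y ∈ Metric.closedBall (0:X) 1
    rw [Metric.mem_closedBall, dist_zero_right] at hy ⊢
    have g1 : ‖G y‖ ≤ 1 := by rw [hGdef]; exact hrr_norm _
    calc ‖(1-t) • y + t • G y‖ ≤ ‖(1-t) • y‖ + ‖t • G y‖ := norm_add_le _ _
      _ = (1-t)*‖y‖ + t*‖G y‖ := by
          rw [norm_smul, norm_smul, Real.norm_eq_abs, Real.norm_eq_abs,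
            abs_of_nonneg (by linarith : (0:ℝ) ≤ 1-t), abs_of_nonneg ht0.le]
      _ ≤ (1-t)*1 + t*1 := by
          have e1 := mul_le_mul_of_nonneg_left hy (by linarith : (0:ℝ) ≤ 1-t)
          have e2 := mul_le_mul_of_nonneg_left g1 ht0.le
          linarith
      _ = 1 := by ring
  · -- fixed point free
    intro y hy hTy
    rw [Metric.mem_closedBall, dist_zero_right] at hy
    have hTy' : (1-t) • y + t • G y = y := hTy
    have h4 : t • G y - t • y = ((1-t) • y + t • G y) - y := by module
    rw [hTy', sub_self] at h4
    exact hGfpf y hy (smul_right_injective X ht0.ne' (sub_eq_zero.mp h4))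
  · -- Lipschitz with constant 1+ε
    intro y _ z _
    show ‖((1-t) • y + t • G y) - ((1-t) • z + t • G z)‖ ≤ (1+ε) * ‖y - z‖
    have hd : ((1-t) • y + t • G y) - ((1-t) • z + t • G z)
        = (1-t) • (y - z) + t • (G y - G z) := by module
    have h1 : ‖(1-t) • (y-z)‖ = (1-t)*‖y-z‖ := by
      rw [norm_smul, Real.norm_eq_abs, abs_of_nonneg (by linarith : (0:ℝ) ≤ 1-t)]
    have h2 : ‖t • (G y - G z)‖ ≤ t * ((2*(B₁+1)) * ‖y - z‖) := by
      rw [norm_smul, Real.norm_eq_abs, abs_of_nonneg ht0.le]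
      exact mul_le_mul_of_nonneg_left (hGlip y z) ht0.le
    have e : t*((2*(B₁+1))*‖y-z‖) = ε*‖y-z‖ := by rw [← htL]; ring
    have e2 : (1-t)*‖y-z‖ = ‖y-z‖ - t*‖y-z‖ := by ring
    have e3 : (1+ε)*‖y-z‖ = ‖y-z‖ + ε*‖y-z‖ := by ring
    have hnn : 0 ≤ t*‖y-z‖ := mul_nonneg ht0.le (norm_nonneg _)
    calc ‖((1-t) • y + t • G y) - ((1-t) • z + t • G z)‖
        ≤ ‖(1-t) • (y-z)‖ + ‖t • (G y - G z)‖ := by rw [hd]; exact norm_add_le _ _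
      _ ≤ (1+ε) * ‖y - z‖ := by
          rw [h1]
          linarith
  · -- minimal displacement is zero
    show sInf ((fun y => ‖y - ((1-t) • y + t • G y)‖) '' Metric.closedBall (0:X) 1) = 0
    have hC0 : (0:ℝ) ≤ 2*‖x 0‖⁻¹ + 2*(M₂ + ‖x 0‖) := by positivity
    have hmem0 : (0:X) ∈ Metric.closedBall (0:X) 1 :=
      Metric.mem_closedBall_self one_pos.le
    have hSne : ((fun y => ‖y - ((1-t) • y + t • G y)‖) ''
        Metric.closedBall (0:X) 1).Nonempty := ⟨_, ⟨0, hmem0, rfl⟩⟩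
    have hSbdd : BddBelow ((fun y => ‖y - ((1-t) • y + t • G y)‖) ''
        Metric.closedBall (0:X) 1) := by
      refine ⟨0, fun r hr => ?_⟩
      obtain ⟨y, _, rfl⟩ := hr
      exact norm_nonneg _
    have hub : ∀ n : ℕ, sInf ((fun y => ‖y - ((1-t) • y + t • G y)‖) ''
        Metric.closedBall (0:X) 1) ≤ (2*‖x 0‖⁻¹ + 2*(M₂ + ‖x 0‖)) / ((n:ℝ)+1) := by
      intro n
      obtain ⟨y, hy1, hy2⟩ := hdisp n
      have hymem : y ∈ Metric.closedBall (0:X) 1 := by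
        rw [Metric.mem_closedBall, dist_zero_right]
        exact hy1
      have hval : ‖y - ((1-t) • y + t • G y)‖ ≤ (2*‖x 0‖⁻¹ + 2*(M₂ + ‖x 0‖)) / ((n:ℝ)+1) := by
        have heq : y - ((1-t) • y + t • G y) = t • (y - G y) := by module
        rw [heq, norm_smul, Real.norm_eq_abs, abs_of_nonneg ht0.le]
        calc t * ‖y - G y‖ ≤ 1 * ‖y - G y‖ :=
              mul_le_mul_of_nonneg_right ht1.le (norm_nonneg _)
          _ = ‖G y - y‖ := by rw [one_mul, norm_sub_rev]
          _ ≤ (2*‖x 0‖⁻¹ + 2*(M₂ + ‖x 0‖)) / ((n:ℝ)+1) := hy2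
      exact le_trans (csInf_le hSbdd ⟨y, hymem, rfl⟩) hval
    have hlb : 0 ≤ sInf ((fun y => ‖y - ((1-t) • y + t • G y)‖) ''
        Metric.closedBall (0:X) 1) := by
      refine le_csInf hSne fun b hb => ?_
      obtain ⟨y, _, rfl⟩ := hb
      exact norm_nonneg _
    have htendC : Tendsto (fun n : ℕ => (2*‖x 0‖⁻¹ + 2*(M₂ + ‖x 0‖)) / ((n:ℝ)+1))
        atTop (𝓝 0) := by
      have h := tendsto_one_div_add_atTop_nhds_zero_nat.const_mul
        (2*‖x 0‖⁻¹ + 2*(M₂ + ‖x 0‖))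
      rw [mul_zero] at h
      refine h.congr fun n => ?_
      rw [← div_eq_mul_one_div]
    have hle := ge_of_tendsto' htendC hub
    exact le_antisymm hle hlb
end

section
/- Let X be a real Banach space with a spreading Schauder basis. Then for every α ∈ (0,1) and every λ > 0 there exists a fixed-point-free α-Hölder λ-Lipschitz map T : B_X → B_X with d(T,B_X) = 0. -/
open Metric Set Filter Topology

section PirHelpers

set_option linter.unusedSectionVars false

variable {X : Type*} [NormedAddCommGroup X] [NormedSpace ℝ X]

/-- radial retraction onto the closed unit ball -/
noncomputable def pir (v : X) : X := (max 1 ‖v‖)⁻¹ • v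

lemma pir_max_pos (v : X) : (0:ℝ) < max 1 ‖v‖ :=
  lt_of_lt_of_le one_pos (le_max_left _ _)

lemma pir_norm_le (v : X) : ‖pir v‖ ≤ 1 := by
  have h0 := pir_max_pos v
  rw [pir, norm_smul, norm_inv, Real.norm_eq_abs, abs_of_pos h0]
  calc (max 1 ‖v‖)⁻¹ * ‖v‖ ≤ (max 1 ‖v‖)⁻¹ * (max 1 ‖v‖) :=
        mul_le_mul_of_nonneg_left (le_max_right _ _) (le_of_lt (inv_pos.mpr h0))
    _ = 1 := inv_mul_cancel₀ (ne_of_gt h0)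

lemma pir_of_le {v : X} (h : ‖v‖ ≤ 1) : pir v = v := by
  rw [pir, max_eq_left h, inv_one, one_smul]

lemma pir_sub_le (v : X) {b : ℝ} (hb : ‖v‖ ≤ b) (h1 : 1 ≤ b) : ‖pir v - v‖ ≤ b - 1 := by
  rcases le_total ‖v‖ 1 with h | h
  · rw [pir_of_le h]; simpa using sub_nonneg.mpr h1
  · have hmax : max 1 ‖v‖ = ‖v‖ := max_eq_right h
    have hvpos : (0:ℝ) < ‖v‖ := lt_of_lt_of_le one_pos h
    have hdec : pir v - v = (‖v‖⁻¹ - 1) • v := by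
      rw [pir, hmax, sub_smul, one_smul]
    rw [hdec, norm_smul, Real.norm_eq_abs]
    have hinv : ‖v‖⁻¹ ≤ 1 := by
      rw [inv_le_one_iff₀]; right; exact h
    have habs : |‖v‖⁻¹ - 1| = 1 - ‖v‖⁻¹ := by
      rw [abs_of_nonpos (by linarith)]; ring
    rw [habs]
    have : (1 - ‖v‖⁻¹) * ‖v‖ = ‖v‖ - 1 := by
      field_simp
    rw [this]
    linarith

lemma pir_lip_aux {v w : X} (h : ‖w‖ ≤ ‖v‖) : ‖pir v - pir w‖ ≤ 2 * ‖v - w‖ := by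
  set a := max 1 ‖v‖ with ha
  set b := max 1 ‖w‖ with hb2
  have h1a : (1:ℝ) ≤ a := le_max_left _ _
  have h1b : (1:ℝ) ≤ b := le_max_left _ _
  have hba : b ≤ a := max_le_max le_rfl h
  have hapos : (0:ℝ) < a := lt_of_lt_of_le one_pos h1a
  have hbpos : (0:ℝ) < b := lt_of_lt_of_le one_pos h1b
  have hdecomp : pir v - pir w = a⁻¹ • (v - w) + (a⁻¹ - b⁻¹) • w := by
    rw [pir, pir, ← ha, ← hb2, smul_sub, sub_smul]; abel
  rw [hdecomp]
  refine le_trans (norm_add_le _ _) ?_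
  have t1 : ‖a⁻¹ • (v - w)‖ ≤ ‖v - w‖ := by
    rw [norm_smul, Real.norm_eq_abs, abs_of_pos (inv_pos.mpr hapos)]
    have hia : a⁻¹ ≤ 1 := by rw [inv_le_one_iff₀]; right; exact h1a
    nlinarith [norm_nonneg (v - w)]
  have t2 : ‖(a⁻¹ - b⁻¹) • w‖ ≤ ‖v - w‖ := by
    rw [norm_smul, Real.norm_eq_abs]
    have hinvle : a⁻¹ ≤ b⁻¹ := inv_anti₀ hbpos hba
    have habs : |a⁻¹ - b⁻¹| = b⁻¹ - a⁻¹ := by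
      rw [abs_of_nonpos (by linarith)]; ring
    rw [habs]
    have hw_le : ‖w‖ ≤ b := le_max_right _ _
    have hab : a - b ≤ ‖v - w‖ := by
      have h2 : a - b ≤ ‖v‖ - ‖w‖ := by
        rcases le_total ‖v‖ 1 with hv | hv
        · have e1 : a = 1 := max_eq_left hv
          have e2 : b = 1 := max_eq_left (le_trans h hv)
          rw [e1, e2]
          simpa using h
        · have e1 : a = ‖v‖ := max_eq_right hv
          rcases le_total ‖w‖ 1 with hw | hw
          · have e2 : b = 1 := max_eq_left hw
            rw [e1, e2]; linarith
          · have e2 : b = ‖w‖ := max_eq_right hw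
            rw [e1, e2]
      exact le_trans h2 (norm_sub_norm_le _ _)
    have step1 : (b⁻¹ - a⁻¹) * ‖w‖ ≤ (b⁻¹ - a⁻¹) * b :=
      mul_le_mul_of_nonneg_left hw_le (by linarith)
    have step2 : (b⁻¹ - a⁻¹) * b = (a - b) * a⁻¹ := by
      field_simp
    have step3 : (a - b) * a⁻¹ ≤ (a - b) := by
      have hia : a⁻¹ ≤ 1 := by rw [inv_le_one_iff₀]; right; exact h1a
      nlinarith [sub_nonneg.mpr hba]
    calc (b⁻¹ - a⁻¹) * ‖w‖ ≤ (a - b) * a⁻¹ := by rw [← step2]; exact step1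
      _ ≤ a - b := step3
      _ ≤ ‖v - w‖ := hab
  linarith

lemma pir_lip (v w : X) : ‖pir v - pir w‖ ≤ 2 * ‖v - w‖ := by
  rcases le_total ‖w‖ ‖v‖ with h | h
  · exact pir_lip_aux h
  · rw [norm_sub_rev, norm_sub_rev v]
    exact pir_lip_aux h

end PirHelpers

set_option maxHeartbeats 3200000 in
theorem statement14 {X : Type*} [NormedAddCommGroup X] [NormedSpace ℝ X] [CompleteSpace X]
    (x : ℕ → X)
    (hbasis : ∀ y : X, ∃! a : ℕ → ℝ,
      Filter.Tendsto (fun N : ℕ => ∑ i ∈ Finset.range N, a i • x i)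
        Filter.atTop (nhds y))
    (hspread : ∀ φ : ℕ → ℕ, StrictMono φ → ∃ A B : ℝ, 0 < A ∧ 0 < B ∧
      ∀ (s : Finset ℕ) (a : ℕ → ℝ),
        A * ‖∑ n ∈ s, a n • x n‖ ≤ ‖∑ n ∈ s, a n • x (φ n)‖ ∧
        ‖∑ n ∈ s, a n • x (φ n)‖ ≤ B * ‖∑ n ∈ s, a n • x n‖)
    (α : ℝ) (hα : α ∈ Set.Ioo (0 : ℝ) 1) (lam : ℝ) (hlam : 0 < lam) :
    ∃ T : X → X,
      Set.MapsTo T (Metric.closedBall (0 : X) 1) (Metric.closedBall (0 : X) 1) ∧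
      (∀ y ∈ Metric.closedBall (0 : X) 1, T y ≠ y) ∧
      (∀ y ∈ Metric.closedBall (0 : X) 1, ∀ z ∈ Metric.closedBall (0 : X) 1,
        ‖T y - T z‖ ≤ lam * ‖y - z‖ ^ α) ∧
      sInf ((fun y => ‖y - T y‖) '' Metric.closedBall (0 : X) 1) = 0 := by
  classical
  obtain ⟨hα0, hα1⟩ := hα
  -- coefficient representation
  have hrepex : ∀ y : X, ∃ a : ℕ → ℝ,
      Tendsto (fun N => ∑ i ∈ Finset.range N, a i • x i) atTop (𝓝 y) :=
    fun y => (hbasis y).exists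
  choose rep hrep using hrepex
  have rep_eq : ∀ (y : X) (b : ℕ → ℝ),
      Tendsto (fun N => ∑ i ∈ Finset.range N, b i • x i) atTop (𝓝 y) → b = rep y := by
    intro y b hb
    obtain ⟨a0, ha0, hu⟩ := hbasis y
    rw [hu b hb, hu (rep y) (hrep y)]
  -- basis vectors are nonzero
  have x_ne : ∀ k : ℕ, x k ≠ 0 := by
    intro k hk
    have h2 : Tendsto (fun N => ∑ i ∈ Finset.range N,
        (fun j => if j = k then (1:ℝ) else 0) i • x i) atTop (𝓝 (0:X)) := by
      have he : ∀ N : ℕ, (∑ i ∈ Finset.range N,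
          (fun j => if j = k then (1:ℝ) else 0) i • x i) = 0 := by
        intro N
        rw [Finset.sum_eq_zero]
        intro i _
        by_cases h : i = k
        · subst h; simp [hk]
        · simp [h]
      simp only [he]
      exact tendsto_const_nhds
    have h1 : Tendsto (fun N => ∑ i ∈ Finset.range N, (fun _ => (0:ℝ)) i • x i)
        atTop (𝓝 (0:X)) := by
      simp only [zero_smul, Finset.sum_const_zero]
      exact tendsto_const_nhds
    have e1 := rep_eq 0 _ h2
    have e2 := rep_eq 0 _ h1
    have : (fun j => if j = k then (1:ℝ) else 0) = (fun _ => (0:ℝ)) := by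
      rw [e1, e2]
    have := congrFun this k
    simp at this
  -- norms bounded below
  have normLB : ∃ c₁ : ℝ, 0 < c₁ ∧ ∀ n, c₁ ≤ ‖x n‖ := by
    by_contra hcon
    push_neg at hcon
    have hxpos : ∀ n, (0:ℝ) < ‖x n‖ := fun n => norm_pos_iff.mpr (x_ne n)
    have key : ∀ b k : ℕ, ∃ n : ℕ, b < n ∧ ‖x n‖ < (2:ℝ)⁻¹ ^ (k+1) * ‖x k‖ := by
      intro b k
      obtain ⟨m0, hm0mem, hm0⟩ := Finset.exists_min_image (Finset.range (b+1))
        (fun m => ‖x m‖) ⟨0, by simp⟩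
      have hcpos : 0 < min ((2:ℝ)⁻¹ ^ (k+1) * ‖x k‖) ‖x m0‖ :=
        lt_min (mul_pos (by positivity) (hxpos k)) (hxpos m0)
      obtain ⟨n, hn⟩ := hcon _ hcpos
      refine ⟨n, ?_, lt_of_lt_of_le hn (min_le_left _ _)⟩
      by_contra hnb
      push_neg at hnb
      have h1 := hm0 n (Finset.mem_range.mpr (Nat.lt_succ_of_le hnb))
      have h2 := lt_of_lt_of_le hn (min_le_right _ _)
      linarith
    let σ : ℕ → ℕ := fun k => Nat.rec (Classical.choose (key 0 0))
      (fun k ih => Classical.choose (key ih (k+1))) k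
    have hσ0 : σ 0 = Classical.choose (key 0 0) := rfl
    have hσs : ∀ k, σ (k+1) = Classical.choose (key (σ k) (k+1)) := fun k => rfl
    have hσmono : StrictMono σ := by
      apply strictMono_nat_of_lt_succ
      intro k
      rw [hσs k]
      exact (Classical.choose_spec (key (σ k) (k+1))).1
    have hσbound : ∀ k, ‖x (σ k)‖ < (2:ℝ)⁻¹ ^ (k+1) * ‖x k‖ := by
      intro k
      cases k with
      | zero => rw [hσ0]; exact (Classical.choose_spec (key 0 0)).2
      | succ k => rw [hσs k]; exact (Classical.choose_spec (key (σ k) (k+1))).2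
    obtain ⟨A, B2, hA, hB2, h⟩ := hspread σ hσmono
    have hAk : ∀ k, A * ‖x k‖ ≤ ‖x (σ k)‖ := by
      intro k
      have := (h {k} (fun _ => (1:ℝ))).1
      simpa using this
    obtain ⟨k, hk⟩ := pow_unbounded_of_one_lt (A⁻¹) (one_lt_two (α := ℝ))
    have h1 := hAk k
    have h2 := hσbound k
    have h3 := hxpos k
    have h4 : A < (2:ℝ)⁻¹ ^ (k+1) :=
      lt_of_mul_lt_mul_right (lt_of_le_of_lt h1 h2) (le_of_lt h3)
    have h6 : ((2:ℝ) ^ k)⁻¹ < A := by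
      rw [inv_lt_comm₀ (by positivity) hA]
      exact hk
    have h7 : (2:ℝ)⁻¹ ^ (k+1) ≤ (2:ℝ)⁻¹ ^ k :=
      pow_le_pow_of_le_one (by norm_num) (by norm_num) (Nat.le_succ k)
    simp only [inv_pow] at h7 h4
    have h8 : ((2:ℝ) ^ (k+1))⁻¹ ≤ ((2:ℝ)^k)⁻¹ := h7
    linarith
  -- norms bounded above
  have normUB : ∃ M₁ : ℝ, 0 < M₁ ∧ ∀ n, ‖x n‖ ≤ M₁ := by
    by_contra hcon
    push_neg at hcon
    have key : ∀ b k : ℕ, ∃ n : ℕ, b < n ∧ (2:ℝ) ^ (k+1) * ‖x k‖ < ‖x n‖ := by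
      intro b k
      obtain ⟨m0, hm0mem, hm0⟩ := Finset.exists_max_image (Finset.range (b+1))
        (fun m => ‖x m‖) ⟨0, by simp⟩
      have hcpos : 0 < max ((2:ℝ) ^ (k+1) * ‖x k‖) ‖x m0‖ + 1 := by
        have h0 : (0:ℝ) ≤ ‖x m0‖ := norm_nonneg _
        have := le_max_right ((2:ℝ) ^ (k+1) * ‖x k‖) ‖x m0‖
        linarith
      obtain ⟨n, hn⟩ := hcon _ hcpos
      have hmax1 : (2:ℝ) ^ (k+1) * ‖x k‖ ≤ max ((2:ℝ) ^ (k+1) * ‖x k‖) ‖x m0‖ :=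
        le_max_left _ _
      refine ⟨n, ?_, by linarith⟩
      by_contra hnb
      push_neg at hnb
      have h1 := hm0 n (Finset.mem_range.mpr (Nat.lt_succ_of_le hnb))
      have hmax2 : ‖x m0‖ ≤ max ((2:ℝ) ^ (k+1) * ‖x k‖) ‖x m0‖ := le_max_right _ _
      linarith
    let σ : ℕ → ℕ := fun k => Nat.rec (Classical.choose (key 0 0))
      (fun k ih => Classical.choose (key ih (k+1))) k
    have hσ0 : σ 0 = Classical.choose (key 0 0) := rfl
    have hσs : ∀ k, σ (k+1) = Classical.choose (key (σ k) (k+1)) := fun k => rfl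
    have hσmono : StrictMono σ := by
      apply strictMono_nat_of_lt_succ
      intro k
      rw [hσs k]
      exact (Classical.choose_spec (key (σ k) (k+1))).1
    have hσbound : ∀ k, (2:ℝ) ^ (k+1) * ‖x k‖ < ‖x (σ k)‖ := by
      intro k
      cases k with
      | zero => rw [hσ0]; exact (Classical.choose_spec (key 0 0)).2
      | succ k => rw [hσs k]; exact (Classical.choose_spec (key (σ k) (k+1))).2
    obtain ⟨A, B2, hA, hB2, h⟩ := hspread σ hσmono
    have hBk : ∀ k, ‖x (σ k)‖ ≤ B2 * ‖x k‖ := by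
      intro k
      have := (h {k} (fun _ => (1:ℝ))).2
      simpa using this
    obtain ⟨k, hk⟩ := pow_unbounded_of_one_lt B2 (one_lt_two (α := ℝ))
    have h1 := hBk k
    have h2 := hσbound k
    have h3 : (0:ℝ) < ‖x k‖ := norm_pos_iff.mpr (x_ne k)
    have h4 : (2:ℝ) ^ (k+1) < B2 :=
      lt_of_mul_lt_mul_right (lt_of_lt_of_le h2 h1) (le_of_lt h3)
    have h5 : (2:ℝ) ^ k ≤ (2:ℝ) ^ (k+1) :=
      pow_le_pow_right₀ (by norm_num) (Nat.le_succ k)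
    linarith
  obtain ⟨c₁, hc₁, hc₁n⟩ := normLB
  obtain ⟨M₁, hM₁, hM₁n⟩ := normUB
  -- shift constants
  obtain ⟨A1, B, hA1, hB, hAB⟩ := hspread (fun n => n + 1)
    (fun a b h => Nat.add_lt_add_right h 1)
  have key2 : ∀ (s : Finset ℕ) (a : ℕ → ℝ),
      ‖∑ n ∈ s, a n • x (n+1)‖ ≤ B * ‖∑ n ∈ s, a n • x n‖ := fun s a => (hAB s a).2
  -- the shifted partial sums form a Cauchy sequence
  have hqdist : ∀ (c : ℕ → ℝ) (m n : ℕ),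
      ‖(∑ i ∈ Finset.range m, c i • x (i+1)) - (∑ i ∈ Finset.range n, c i • x (i+1))‖
        ≤ B * ‖(∑ i ∈ Finset.range m, c i • x i) - (∑ i ∈ Finset.range n, c i • x i)‖ := by
    have base : ∀ (c : ℕ → ℝ) (m n : ℕ), m ≤ n →
        ‖(∑ i ∈ Finset.range n, c i • x (i+1)) - (∑ i ∈ Finset.range m, c i • x (i+1))‖
          ≤ B * ‖(∑ i ∈ Finset.range n, c i • x i) - (∑ i ∈ Finset.range m, c i • x i)‖ := by
      intro c m n h
      rw [← Finset.sum_Ico_eq_sub _ h, ← Finset.sum_Ico_eq_sub _ h]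
      exact key2 _ _
    intro c m n
    rcases le_total m n with h | h
    · rw [norm_sub_rev, norm_sub_rev (∑ i ∈ Finset.range m, c i • x i)]
      exact base c m n h
    · exact base c n m h
  have hqC : ∀ y : X, CauchySeq (fun N => ∑ i ∈ Finset.range N, rep y i • x (i+1)) := by
    intro y
    have hpC : CauchySeq (fun N => ∑ i ∈ Finset.range N, rep y i • x i) := (hrep y).cauchySeq
    rw [Metric.cauchySeq_iff] at hpC ⊢
    intro ε hε
    obtain ⟨N, hN⟩ := hpC (ε / B) (div_pos hε hB)
    refine ⟨N, fun m hm n hn => ?_⟩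
    have h1 := hN m hm n hn
    rw [dist_eq_norm] at h1 ⊢
    calc ‖_ - _‖ ≤ B * ‖(∑ i ∈ Finset.range m, rep y i • x i)
          - (∑ i ∈ Finset.range n, rep y i • x i)‖ := hqdist _ m n
      _ < B * (ε / B) := by
          exact mul_lt_mul_of_pos_left h1 hB
      _ = ε := by field_simp
  have hSex : ∀ y : X, ∃ z : X,
      Tendsto (fun N => ∑ i ∈ Finset.range N, rep y i • x (i+1)) atTop (𝓝 z) :=
    fun y => cauchySeq_tendsto_of_complete (hqC y)
  choose S hS using hSex
  -- S is Lipschitz with constant B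
  have hSlip : ∀ y z : X, ‖S y - S z‖ ≤ B * ‖y - z‖ := by
    intro y z
    have h1 : Tendsto (fun N => ‖(∑ i ∈ Finset.range N, rep y i • x (i+1))
        - (∑ i ∈ Finset.range N, rep z i • x (i+1))‖) atTop (𝓝 ‖S y - S z‖) :=
      ((hS y).sub (hS z)).norm
    have h2 : Tendsto (fun N => B * ‖(∑ i ∈ Finset.range N, rep y i • x i)
        - (∑ i ∈ Finset.range N, rep z i • x i)‖) atTop (𝓝 (B * ‖y - z‖)) :=
      (((hrep y).sub (hrep z)).norm).const_mul B
    refine le_of_tendsto_of_tendsto' h1 h2 (fun N => ?_)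
    have e1 : (∑ i ∈ Finset.range N, rep y i • x (i+1))
        - (∑ i ∈ Finset.range N, rep z i • x (i+1))
        = ∑ i ∈ Finset.range N, (fun j => rep y j - rep z j) i • x (i+1) := by
      simp [sub_smul, Finset.sum_sub_distrib]
    have e2 : (∑ i ∈ Finset.range N, rep y i • x i)
        - (∑ i ∈ Finset.range N, rep z i • x i)
        = ∑ i ∈ Finset.range N, (fun j => rep y j - rep z j) i • x i := by
      simp [sub_smul, Finset.sum_sub_distrib]
    rw [e1, e2]
    exact key2 _ _
  -- rep of scalar multiples
  have rep_smul : ∀ (c : ℝ) (y : X), rep (c • y) = fun i => c * rep y i := by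
    intro c y
    refine (rep_eq (c • y) (fun i => c * rep y i) ?_).symm
    have h := (hrep y).const_smul c
    simp only [Finset.smul_sum, smul_smul] at h
    exact h
  -- S of scalar multiples
  have hSsmul : ∀ (c : ℝ) (y : X), S (c • y) = c • S y := by
    intro c y
    refine tendsto_nhds_unique (hS (c • y)) ?_
    have h2 : Tendsto (fun N => c • ∑ i ∈ Finset.range N, rep y i • x (i+1))
        atTop (𝓝 (c • S y)) := (hS y).const_smul c
    refine h2.congr (fun N => ?_)
    rw [rep_smul c y]
    simp [Finset.smul_sum, smul_smul]
  -- the core map has no fixed point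
  have no_fix : ∀ u : X, pir ((1 - ‖u‖) • x 0 + S u) ≠ u := by
    intro u hfix
    set z := (1 - ‖u‖) • x 0 + S u with hzdef
    set b : ℕ → ℝ := fun j => Nat.rec (1 - ‖u‖) (fun i _ => rep u i) j with hbdef
    have hb0 : b 0 = 1 - ‖u‖ := rfl
    have hbs : ∀ i, b (i+1) = rep u i := fun i => rfl
    have hzrep : Tendsto (fun N => ∑ i ∈ Finset.range N, b i • x i) atTop (𝓝 z) := by
      rw [← tendsto_add_atTop_iff_nat 1]
      have heq : ∀ N : ℕ, (∑ i ∈ Finset.range (N+1), b i • x i)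
          = (∑ i ∈ Finset.range N, rep u i • x (i+1)) + (1 - ‖u‖) • x 0 := by
        intro N
        rw [Finset.sum_range_succ']
        simp only [hbs, hb0]
      have h2 : Tendsto (fun N => (∑ i ∈ Finset.range N, rep u i • x (i+1))
          + (1 - ‖u‖) • x 0) atTop (𝓝 (S u + (1 - ‖u‖) • x 0)) :=
        (hS u).add tendsto_const_nhds
      rw [hzdef]
      simp only [heq]
      simpa [add_comm] using h2
    have hrepz : b = rep z := rep_eq z b hzrep
    have all_zero_imp : (∀ i, rep u i = 0) → u = 0 := by
      intro hall
      have h0 : Tendsto (fun N => ∑ i ∈ Finset.range N, rep u i • x i) atTop (𝓝 (0:X)) := by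
        have : ∀ N : ℕ, (∑ i ∈ Finset.range N, rep u i • x i) = 0 := by
          intro N
          apply Finset.sum_eq_zero
          intro i _
          rw [hall i, zero_smul]
        simp only [this]
        exact tendsto_const_nhds
      exact tendsto_nhds_unique (hrep u) h0
    rcases le_or_gt ‖z‖ 1 with hle | hgt
    · -- unclipped case
      have huz : u = z := by rw [← hfix, pir_of_le hle]
      have hrepu : rep u = b := by rw [huz, ← hrepz]
      have hconst : ∀ i, rep u i = rep u 0 := by
        intro i
        induction i with
        | zero => rfl
        | succ i ih =>
          have e : rep u (i+1) = rep u i := by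
            calc rep u (i+1) = b (i+1) := congrFun hrepu (i+1)
              _ = rep u i := hbs i
          rw [e, ih]
      have hterm : Tendsto (fun N => rep u N • x N) atTop (𝓝 (0:X)) := by
        have h1 : Tendsto (fun N => ∑ i ∈ Finset.range (N+1), rep u i • x i)
            atTop (𝓝 u) := (tendsto_add_atTop_iff_nat 1).mpr (hrep u)
        have h2 := h1.sub (hrep u)
        simp only [Finset.sum_range_succ, add_sub_cancel_left, sub_self] at h2
        exact h2
      have hzero : rep u 0 = 0 := by
        by_contra hne
        have hbound : ∀ N, |rep u 0| * c₁ ≤ ‖rep u N • x N‖ := by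
          intro N
          rw [hconst N, norm_smul, Real.norm_eq_abs]
          exact mul_le_mul_of_nonneg_left (hc₁n N) (abs_nonneg _)
        have hlim : Tendsto (fun N => ‖rep u N • x N‖) atTop (𝓝 ‖(0:X)‖) := hterm.norm
        rw [norm_zero] at hlim
        have := le_of_tendsto_of_tendsto' tendsto_const_nhds hlim hbound
        have habs : 0 < |rep u 0| := abs_pos.mpr hne
        nlinarith
      have hu0 : u = 0 := all_zero_imp (fun i => by rw [hconst i, hzero])
      have hfin : rep u 0 = 1 - ‖u‖ := by
        calc rep u 0 = b 0 := congrFun hrepu 0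
          _ = 1 - ‖u‖ := hb0
      have h9 : ‖u‖ = 1 := by rw [hzero] at hfin; linarith
      rw [hu0, norm_zero] at h9
      exact absurd h9 zero_ne_one
    · -- clipped case
      have hzpos : (0:ℝ) < ‖z‖ := lt_trans one_pos hgt
      have hmax : max 1 ‖z‖ = ‖z‖ := max_eq_right (le_of_lt hgt)
      have hu_eq : u = ‖z‖⁻¹ • z := by rw [← hfix, pir, hmax]
      have hnu : ‖u‖ = 1 := by
        rw [hu_eq, norm_smul, Real.norm_eq_abs, abs_of_pos (inv_pos.mpr hzpos),
          inv_mul_cancel₀ (ne_of_gt hzpos)]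
      have hrepu : rep u = fun i => ‖z‖⁻¹ * b i := by
        rw [hu_eq, rep_smul, hrepz]
      have h0 : rep u 0 = 0 := by
        have := congrFun hrepu 0
        rw [hb0, hnu] at this
        simpa using this
      have hstep : ∀ i, rep u (i+1) = ‖z‖⁻¹ * rep u i := by
        intro i
        calc rep u (i+1) = ‖z‖⁻¹ * b (i+1) := congrFun hrepu (i+1)
          _ = ‖z‖⁻¹ * rep u i := by rw [hbs]
      have hall : ∀ i, rep u i = 0 := by
        intro i
        induction i with
        | zero => exact h0
        | succ i ih => rw [hstep, ih, mul_zero]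
      have hu0 : u = 0 := all_zero_imp hall
      rw [hu0, norm_zero] at hnu
      exact absurd hnu.symm one_ne_zero
  -- small displacement witnesses
  have disp : ∀ ρ : ℝ, 0 < ρ → ρ < 1 → ∃ w : X, ‖w‖ ≤ 1 ∧
      ‖pir ((1 - ‖w‖) • x 0 + S w) - w‖ ≤ 2 * ((1 - ρ)/ρ) := by
    intro ρ hρ0 hρ1
    -- the geometric vector v = ∑ ρ^i • x i
    have hCau : CauchySeq (fun N => ∑ i ∈ Finset.range N, ρ^i • x i) := by
      apply cauchySeq_of_le_geometric ρ M₁ hρ1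
      intro n
      rw [dist_eq_norm, Finset.sum_range_succ]
      have e : (∑ i ∈ Finset.range n, ρ^i • x i)
          - ((∑ i ∈ Finset.range n, ρ^i • x i) + ρ^n • x n) = -(ρ^n • x n) := by abel
      rw [e, norm_neg, norm_smul, Real.norm_eq_abs, abs_of_pos (pow_pos hρ0 n)]
      calc ρ^n * ‖x n‖ ≤ ρ^n * M₁ :=
            mul_le_mul_of_nonneg_left (hM₁n n) (le_of_lt (pow_pos hρ0 n))
        _ = M₁ * ρ^n := mul_comm _ _
    obtain ⟨v, hv⟩ := cauchySeq_tendsto_of_complete hCau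
    have hrepv : (fun i => ρ^i) = rep v := rep_eq v _ hv
    -- S v = ρ⁻¹ • (v - x 0)
    have hSv : S v = ρ⁻¹ • (v - x 0) := by
      refine tendsto_nhds_unique (hS v) ?_
      have heq : ∀ N : ℕ, (∑ i ∈ Finset.range N, rep v i • x (i+1))
          = ρ⁻¹ • ((∑ j ∈ Finset.range (N+1), ρ^j • x j) - x 0) := by
        intro N
        simp only [← hrepv]
        rw [Finset.sum_range_succ']
        have e1 : (∑ i ∈ Finset.range N, ρ^(i+1) • x (i+1)) + ρ^0 • x 0 - x 0
            = ∑ i ∈ Finset.range N, ρ^(i+1) • x (i+1) := by simp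
        rw [e1, Finset.smul_sum]
        apply Finset.sum_congr rfl
        intro i _
        rw [smul_smul, pow_succ']
        rw [← mul_assoc, inv_mul_cancel₀ (ne_of_gt hρ0), one_mul]
      have h2 : Tendsto (fun N => ρ⁻¹ • ((∑ j ∈ Finset.range (N+1), ρ^j • x j) - x 0))
          atTop (𝓝 (ρ⁻¹ • (v - x 0))) := by
        apply Tendsto.const_smul
        apply Tendsto.sub_const
        exact (tendsto_add_atTop_iff_nat 1).mpr hv
      exact (h2.congr (fun N => (heq N).symm))
    -- the witness w = δ • v
    obtain ⟨g, hgdef⟩ : ∃ g : ℝ, g = ‖v‖ := ⟨_, rfl⟩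
    have hg0 : 0 ≤ g := hgdef ▸ norm_nonneg v
    have hden : (0:ℝ) < 1 + ρ * g := by nlinarith
    obtain ⟨δ, hδdef⟩ : ∃ δ : ℝ, δ = ρ / (1 + ρ * g) := ⟨_, rfl⟩
    have hδ0 : 0 < δ := hδdef ▸ div_pos hρ0 hden
    have hwnorm : ‖δ • v‖ = δ * g := by
      rw [norm_smul, Real.norm_eq_abs, abs_of_pos hδ0, ← hgdef]
    have hδg : δ * g ≤ 1 := by
      rw [hδdef, div_mul_eq_mul_div, div_le_one hden]
      nlinarith
    have hmatch : 1 - δ * g = δ / ρ := by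
      rw [hδdef]
      field_simp
      ring
    have hzeq : (1 - ‖δ • v‖) • x 0 + S (δ • v) = (δ/ρ) • v := by
      have hSw : S (δ • v) = δ • (ρ⁻¹ • (v - x 0)) := by rw [hSsmul, hSv]
      rw [hwnorm, hSw, hmatch, smul_smul, ← div_eq_mul_inv, smul_sub]
      abel
    refine ⟨δ • v, by rw [hwnorm]; exact hδg, ?_⟩
    rw [hzeq]
    have hz_norm : ‖(δ/ρ) • v‖ = (δ/ρ) * g := by
      rw [norm_smul, Real.norm_eq_abs, abs_of_pos (div_pos hδ0 hρ0), ← hgdef]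
    have hz_le : ‖(δ/ρ) • v‖ ≤ 1/ρ := by
      rw [hz_norm, div_mul_eq_mul_div, div_le_div_iff_of_pos_right hρ0]
      exact hδg
    have h1ρ : (1:ℝ) ≤ 1/ρ := by
      rw [le_div_iff₀ hρ0]; linarith
    have t1 : ‖pir ((δ/ρ) • v) - (δ/ρ) • v‖ ≤ 1/ρ - 1 := pir_sub_le _ hz_le h1ρ
    have t2 : ‖(δ/ρ) • v - δ • v‖ ≤ (1 - ρ)/ρ := by
      have e : (δ/ρ) • v - δ • v = (δ/ρ - δ) • v := by
        rw [sub_smul]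
      rw [e, norm_smul, Real.norm_eq_abs]
      have hδρδ : 0 ≤ δ/ρ - δ := by
        rw [sub_nonneg, le_div_iff₀ hρ0]
        nlinarith
      rw [abs_of_nonneg hδρδ, ← hgdef]
      have e2 : (δ/ρ - δ) * g = (δ * g) * ((1 - ρ)/ρ) := by
        field_simp
      rw [e2]
      have h3 : 0 ≤ (1 - ρ)/ρ := div_nonneg (by linarith) (le_of_lt hρ0)
      nlinarith
    have e3 : (1:ℝ)/ρ - 1 = (1 - ρ)/ρ := by
      field_simp
    calc ‖pir ((δ/ρ) • v) - δ • v‖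
        ≤ ‖pir ((δ/ρ) • v) - (δ/ρ) • v‖ + ‖(δ/ρ) • v - δ • v‖ :=
          norm_sub_le_norm_sub_add_norm_sub _ _ _
      _ ≤ (1/ρ - 1) + (1 - ρ)/ρ := add_le_add t1 t2
      _ = 2 * ((1 - ρ)/ρ) := by rw [e3]; ring
  -- constants for the final rescaling
  obtain ⟨C0, hC0⟩ : ∃ C0 : ℝ, C0 = ‖x 0‖ + B := ⟨_, rfl⟩
  have hC0pos : 0 < C0 := hC0 ▸ add_pos_of_nonneg_of_pos (norm_nonneg _) hB
  obtain ⟨CL, hCL⟩ : ∃ CL : ℝ, CL = 4 * C0 + 2 := ⟨_, rfl⟩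
  have hCLpos : 0 < CL := by rw [hCL]; nlinarith
  have hlamCL : 0 < lam / CL := div_pos hlam hCLpos
  have h1α : (0:ℝ) < 1 - α := by linarith
  obtain ⟨s₀, hs₀⟩ : ∃ s₀ : ℝ, s₀ = min 1 ((lam / CL) ^ ((1:ℝ)/(1-α))) := ⟨_, rfl⟩
  have hs₀pos : 0 < s₀ := hs₀ ▸ lt_min one_pos (Real.rpow_pos_of_pos hlamCL _)
  have hs₀le1 : s₀ ≤ 1 := hs₀ ▸ min_le_left _ _
  have hs₀pow : s₀ ^ (1 - α) ≤ lam / CL := by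
    have h1 : s₀ ≤ (lam / CL) ^ ((1:ℝ)/(1-α)) := hs₀ ▸ min_le_right _ _
    have h2 : s₀ ^ (1-α) ≤ ((lam / CL) ^ ((1:ℝ)/(1-α))) ^ (1-α) :=
      Real.rpow_le_rpow (le_of_lt hs₀pos) h1 (le_of_lt h1α)
    rwa [← Real.rpow_mul (le_of_lt hlamCL), one_div,
      inv_mul_cancel₀ (ne_of_gt h1α), Real.rpow_one] at h2
  set Tfin : X → X := fun y =>
    s₀ • pir ((1 - ‖pir (s₀⁻¹ • y)‖) • x 0 + S (pir (s₀⁻¹ • y))) with hTfin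
  have hlb : ∀ r ∈ (fun y => ‖y - Tfin y‖) '' Metric.closedBall (0:X) 1, 0 ≤ r := by
    rintro r ⟨y, _, rfl⟩
    exact norm_nonneg _
  have hne : ((fun y => ‖y - Tfin y‖) '' Metric.closedBall (0:X) 1).Nonempty :=
    ⟨_, ⟨0, Metric.mem_closedBall_self zero_le_one, rfl⟩⟩
  refine ⟨Tfin, ?_, ?_, ?_, ?_⟩
  · -- MapsTo
    intro y hy
    rw [Metric.mem_closedBall, dist_zero_right]
    simp only [hTfin]
    rw [norm_smul, Real.norm_eq_abs, abs_of_pos hs₀pos]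
    have h1 := pir_norm_le ((1 - ‖pir (s₀⁻¹ • y)‖) • x 0 + S (pir (s₀⁻¹ • y)))
    nlinarith
  · -- no fixed point
    intro y hy hfix
    simp only [hTfin] at hfix
    have hTn : ‖pir ((1 - ‖pir (s₀⁻¹ • y)‖) • x 0 + S (pir (s₀⁻¹ • y)))‖ ≤ 1 :=
      pir_norm_le _
    have hynorm : ‖y‖ ≤ s₀ := by
      rw [← hfix, norm_smul, Real.norm_eq_abs, abs_of_pos hs₀pos]
      nlinarith
    have h2 : ‖s₀⁻¹ • y‖ ≤ 1 := by
      rw [norm_smul, Real.norm_eq_abs, abs_of_pos (inv_pos.mpr hs₀pos)]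
      calc s₀⁻¹ * ‖y‖ ≤ s₀⁻¹ * s₀ :=
            mul_le_mul_of_nonneg_left hynorm (le_of_lt (inv_pos.mpr hs₀pos))
        _ = 1 := inv_mul_cancel₀ (ne_of_gt hs₀pos)
    rw [pir_of_le h2] at hfix
    have h4 : pir ((1 - ‖s₀⁻¹ • y‖) • x 0 + S (s₀⁻¹ • y)) = s₀⁻¹ • y := by
      have h5 := congrArg (fun t => s₀⁻¹ • t) hfix
      simpa [smul_smul, inv_mul_cancel₀ (ne_of_gt hs₀pos)] using h5
    exact no_fix _ h4
  · -- Hölder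
    intro y hy z hz
    by_cases hyz : y = z
    · subst hyz
      simp [Real.zero_rpow (ne_of_gt hα0)]
    have hd0 : 0 < ‖y - z‖ := by
      rw [norm_pos_iff]; exact sub_ne_zero.mpr hyz
    have hdα : 0 < ‖y - z‖ ^ α := Real.rpow_pos_of_pos hd0 α
    have hinner : ∀ a b : X,
        ‖((1 - ‖a‖) • x 0 + S a) - ((1 - ‖b‖) • x 0 + S b)‖ ≤ C0 * ‖a - b‖ := by
      intro a b
      have e1 : ((1 - ‖a‖) • x 0 + S a) - ((1 - ‖b‖) • x 0 + S b)
          = (‖b‖ - ‖a‖) • x 0 + (S a - S b) := by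
        have e2 : (‖b‖ - ‖a‖) • x 0 = (1 - ‖a‖) • x 0 - (1 - ‖b‖) • x 0 := by
          rw [← sub_smul]; congr 1; ring
        rw [e2]; abel
      rw [e1]
      refine le_trans (norm_add_le _ _) ?_
      have t1 : ‖(‖b‖ - ‖a‖) • x 0‖ ≤ ‖a - b‖ * ‖x 0‖ := by
        rw [norm_smul, Real.norm_eq_abs]
        have h5 : |‖b‖ - ‖a‖| ≤ ‖b - a‖ := abs_norm_sub_norm_le b a
        rw [norm_sub_rev] at h5
        exact mul_le_mul_of_nonneg_right h5 (norm_nonneg _)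
      have t2 := hSlip a b
      rw [hC0]
      nlinarith [norm_nonneg (a - b), norm_nonneg (x 0)]
    have hT12 : ‖Tfin y - Tfin z‖ ≤ 4 * C0 * ‖y - z‖ := by
      simp only [hTfin]
      rw [← smul_sub, norm_smul, Real.norm_eq_abs, abs_of_pos hs₀pos]
      have step4 : ‖s₀⁻¹ • y - s₀⁻¹ • z‖ = s₀⁻¹ * ‖y - z‖ := by
        rw [← smul_sub, norm_smul, Real.norm_eq_abs, abs_of_pos (inv_pos.mpr hs₀pos)]
      have step3 : ‖pir (s₀⁻¹ • y) - pir (s₀⁻¹ • z)‖ ≤ 2 * (s₀⁻¹ * ‖y - z‖) := by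
        rw [← step4]
        exact pir_lip _ _
      have step2 : ‖((1 - ‖pir (s₀⁻¹ • y)‖) • x 0 + S (pir (s₀⁻¹ • y)))
          - ((1 - ‖pir (s₀⁻¹ • z)‖) • x 0 + S (pir (s₀⁻¹ • z)))‖
          ≤ C0 * ‖pir (s₀⁻¹ • y) - pir (s₀⁻¹ • z)‖ := hinner _ _
      have step1 : ‖pir ((1 - ‖pir (s₀⁻¹ • y)‖) • x 0 + S (pir (s₀⁻¹ • y)))
          - pir ((1 - ‖pir (s₀⁻¹ • z)‖) • x 0 + S (pir (s₀⁻¹ • z)))‖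
          ≤ 2 * ‖((1 - ‖pir (s₀⁻¹ • y)‖) • x 0 + S (pir (s₀⁻¹ • y)))
          - ((1 - ‖pir (s₀⁻¹ • z)‖) • x 0 + S (pir (s₀⁻¹ • z)))‖ := pir_lip _ _
      have c2 : ‖((1 - ‖pir (s₀⁻¹ • y)‖) • x 0 + S (pir (s₀⁻¹ • y)))
          - ((1 - ‖pir (s₀⁻¹ • z)‖) • x 0 + S (pir (s₀⁻¹ • z)))‖
          ≤ C0 * (2 * (s₀⁻¹ * ‖y - z‖)) :=
        le_trans step2 (mul_le_mul_of_nonneg_left step3 (le_of_lt hC0pos))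
      have c3 : ‖pir ((1 - ‖pir (s₀⁻¹ • y)‖) • x 0 + S (pir (s₀⁻¹ • y)))
          - pir ((1 - ‖pir (s₀⁻¹ • z)‖) • x 0 + S (pir (s₀⁻¹ • z)))‖
          ≤ 2 * (C0 * (2 * (s₀⁻¹ * ‖y - z‖))) := le_trans step1 (by linarith)
      have c4 : s₀ * (2 * (C0 * (2 * (s₀⁻¹ * ‖y - z‖)))) = 4 * C0 * ‖y - z‖ := by
        field_simp
        ring
      calc s₀ * ‖pir ((1 - ‖pir (s₀⁻¹ • y)‖) • x 0 + S (pir (s₀⁻¹ • y)))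
          - pir ((1 - ‖pir (s₀⁻¹ • z)‖) • x 0 + S (pir (s₀⁻¹ • z)))‖
          ≤ s₀ * (2 * (C0 * (2 * (s₀⁻¹ * ‖y - z‖)))) :=
            mul_le_mul_of_nonneg_left c3 (le_of_lt hs₀pos)
        _ = 4 * C0 * ‖y - z‖ := c4
    have hb2 : ‖Tfin y - Tfin z‖ ≤ 2 * s₀ := by
      simp only [hTfin]
      refine le_trans (norm_sub_le _ _) ?_
      rw [norm_smul, norm_smul, Real.norm_eq_abs, abs_of_pos hs₀pos]
      have p1 := pir_norm_le ((1 - ‖pir (s₀⁻¹ • y)‖) • x 0 + S (pir (s₀⁻¹ • y)))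
      have p2 := pir_norm_le ((1 - ‖pir (s₀⁻¹ • z)‖) • x 0 + S (pir (s₀⁻¹ • z)))
      nlinarith
    rcases le_total ‖y - z‖ s₀ with hds | hds
    · have k1 : ‖y - z‖ ^ (1-α) ≤ s₀ ^ (1-α) :=
        Real.rpow_le_rpow (le_of_lt hd0) hds (le_of_lt h1α)
      have hrpowd : ‖y - z‖ = ‖y - z‖ ^ (1-α) * ‖y - z‖ ^ α := by
        rw [← Real.rpow_add hd0, sub_add_cancel, Real.rpow_one]
      have e : 4 * C0 * (lam / CL) ≤ lam := by
        rw [mul_comm (4 * C0) (lam / CL), div_mul_eq_mul_div, div_le_iff₀ hCLpos]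
        rw [hCL]
        nlinarith
      calc ‖Tfin y - Tfin z‖ ≤ 4*C0*‖y - z‖ := hT12
        _ = 4*C0*(‖y - z‖^(1-α) * ‖y - z‖^α) := by rw [← hrpowd]
        _ ≤ 4*C0*((lam/CL) * ‖y - z‖^α) := by
            have h7 := mul_le_mul_of_nonneg_right (le_trans k1 hs₀pow) (le_of_lt hdα)
            nlinarith
        _ = (4*C0*(lam/CL)) * ‖y - z‖^α := by ring
        _ ≤ lam * ‖y - z‖ ^ α := mul_le_mul_of_nonneg_right e (le_of_lt hdα)
    · have k1 : s₀ ^ α ≤ ‖y - z‖ ^ α :=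
        Real.rpow_le_rpow (le_of_lt hs₀pos) hds (le_of_lt hα0)
      have hspow : s₀ = s₀^(1-α) * s₀^α := by
        rw [← Real.rpow_add hs₀pos, sub_add_cancel, Real.rpow_one]
      have e : 2 * (lam/CL) ≤ lam := by
        rw [mul_comm, div_mul_eq_mul_div, div_le_iff₀ hCLpos]
        rw [hCL]
        nlinarith
      calc ‖Tfin y - Tfin z‖ ≤ 2*s₀ := hb2
        _ = 2*(s₀^(1-α) * s₀^α) := by rw [← hspow]
        _ ≤ 2*((lam/CL) * ‖y - z‖^α) := by
            have h6 : s₀^(1-α) * s₀^α ≤ (lam/CL) * ‖y - z‖^α :=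
              mul_le_mul hs₀pow k1 (Real.rpow_nonneg (le_of_lt hs₀pos) α)
                (le_of_lt hlamCL)
            linarith
        _ = (2*(lam/CL)) * ‖y - z‖^α := by ring
        _ ≤ lam * ‖y - z‖ ^ α := mul_le_mul_of_nonneg_right e (le_of_lt hdα)
  · -- sInf of displacement is zero
    apply le_antisymm
    · apply le_of_forall_pos_le_add
      intro ε hε
      have htpos : 0 < ε / (4 * s₀ + 1) := by positivity
      obtain ⟨t, ht⟩ : ∃ t : ℝ, t = ε / (4 * s₀ + 1) := ⟨_, rfl⟩
      have htpos' : 0 < t := ht ▸ htpos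
      obtain ⟨ρ, hρ⟩ : ∃ ρ : ℝ, ρ = (1 + t)⁻¹ := ⟨_, rfl⟩
      have h1t : (0:ℝ) < 1 + t := by linarith
      have hρ0 : 0 < ρ := hρ ▸ inv_pos.mpr h1t
      have hρ1 : ρ < 1 := by
        rw [hρ, inv_lt_one_iff₀]
        right; linarith
      obtain ⟨w, hw1, hw2⟩ := disp ρ hρ0 hρ1
      have hmem : s₀ • w ∈ Metric.closedBall (0:X) 1 := by
        rw [Metric.mem_closedBall, dist_zero_right, norm_smul, Real.norm_eq_abs,
          abs_of_pos hs₀pos]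
        nlinarith
      have hρt : (1 - ρ)/ρ = t := by
        rw [hρ]
        field_simp
        ring
      have hval : ‖s₀ • w - Tfin (s₀ • w)‖ ≤ 2 * s₀ * t := by
        have h1 : s₀⁻¹ • (s₀ • w) = w := inv_smul_smul₀ (ne_of_gt hs₀pos) w
        simp only [hTfin, h1, pir_of_le hw1]
        rw [← smul_sub, norm_smul, Real.norm_eq_abs, abs_of_pos hs₀pos, norm_sub_rev]
        rw [hρt] at hw2
        nlinarith [hw2]
      have h4s : (0:ℝ) < 4*s₀+1 := by nlinarith
      have hfinal : 2 * s₀ * t ≤ ε := by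
        rw [ht, show 2*s₀*(ε/(4*s₀+1)) = (2*s₀*ε)/(4*s₀+1) from by ring,
          div_le_iff₀ h4s]
        nlinarith
      refine le_trans (csInf_le ⟨0, fun r hr => hlb r hr⟩ ⟨s₀ • w, hmem, rfl⟩) ?_
      rw [zero_add]
      exact le_trans hval hfinal
    · exact le_csInf hne (fun b hb => hlb b hb)
end

section
/- Let H be an infinite-dimensional real Hilbert space. Then for every α ∈ (0,1) and every λ > 0 there exists a fixed-point-free α-Hölder λ-Lipschitz map T : B_H → B_H with d(T,B_H) = 0. -/
open Metric Set Filter Topology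

open scoped RealInnerProductSpace
section
variable {H : Type*} [NormedAddCommGroup H] [InnerProductSpace ℝ H] [CompleteSpace H]

noncomputable def Uop (e : ℕ → H) (x : H) : H := ∑' n, (⟪e n, x⟫ • e (n + 1))

lemma hasSum_Uop {e : ℕ → H} (he : Orthonormal ℝ e) (x : H) :
    HasSum (fun n => ⟪e n, x⟫ • e (n + 1)) (Uop e x) := by
  have h1 : Orthonormal ℝ (fun n => e (n + 1)) := he.comp _ (fun a b => by omega)
  have h2 := h1.orthogonalFamily
  have h3 : Summable (fun n => ⟪e n, x⟫ • e (n + 1)) := by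
    have h4 := (h2.summable_iff_norm_sq_summable (fun n => ⟪e n, x⟫)).2
      (by simpa using he.inner_products_summable (x := x))
    simpa [LinearIsometry.toSpanSingleton_apply] using h4
  exact h3.hasSum

lemma Uop_inner_zero {e : ℕ → H} (he : Orthonormal ℝ e) (x : H) :
    ⟪e 0, Uop e x⟫ = 0 := by
  have h := (hasSum_Uop he x).mapL (innerSL ℝ (e 0))
  have h2 : HasSum (fun n : ℕ => (0 : ℝ)) (⟪e 0, Uop e x⟫) := by
    convert h using 2 with n
    · rfl
    rw [innerSL_apply_apply, real_inner_smul_right, orthonormal_iff_ite.1 he]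
    simp
    rw [innerSL_apply_apply]
  simpa using h2.unique hasSum_zero

lemma Uop_inner_succ {e : ℕ → H} (he : Orthonormal ℝ e) (x : H) (m : ℕ) :
    ⟪e (m + 1), Uop e x⟫ = ⟪e m, x⟫ := by
  have h := (hasSum_Uop he x).mapL (innerSL ℝ (e (m + 1)))
  have h2 : HasSum (fun n : ℕ => if n = m then ⟪e m, x⟫ else 0) (⟪e (m + 1), Uop e x⟫) := by
    convert h using 2 with n
    · rfl
    rw [innerSL_apply_apply, real_inner_smul_right, orthonormal_iff_ite.1 he]
    by_cases hnm : n = m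
    · simp [hnm]
    · rw [if_neg hnm, if_neg (by omega), mul_zero]
    rw [innerSL_apply_apply]
  exact h2.unique (hasSum_ite_eq m _)

lemma Uop_sub {e : ℕ → H} (he : Orthonormal ℝ e) (x y : H) :
    Uop e (x - y) = Uop e x - Uop e y := by
  have h := (hasSum_Uop he x).sub (hasSum_Uop he y)
  refine HasSum.unique (hasSum_Uop he (x - y)) ?_
  convert h using 2 with n
  rw [inner_sub_right, sub_smul]

lemma norm_Uop_le {e : ℕ → H} (he : Orthonormal ℝ e) (x : H) : ‖Uop e x‖ ≤ ‖x‖ := by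
  have h1 : Orthonormal ℝ (fun n => e (n + 1)) := he.comp _ (fun a b => by omega)
  have h2 := h1.orthogonalFamily
  refine le_of_tendsto (hasSum_Uop he x).tendsto_sum_nat.norm
    (Filter.Eventually.of_forall fun n => ?_)
  have hsq := h2.norm_sum (fun i => ⟪e i, x⟫) (Finset.range n)
  simp only [LinearIsometry.toSpanSingleton_apply] at hsq
  have hb := he.sum_inner_products_le (s := Finset.range n) x
  nlinarith [norm_nonneg x, norm_nonneg (∑ i ∈ Finset.range n, (⟪e i, x⟫ • e (i + 1)))]
end

section
variable {H : Type*} [NormedAddCommGroup H] [InnerProductSpace ℝ H] [CompleteSpace H]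

noncomputable def Smap (e : ℕ → H) (x : H) : H := (1 - ‖x‖) • e 0 + Uop e x

lemma norm_Smap_le {e : ℕ → H} (he : Orthonormal ℝ e) {x : H} (hx : ‖x‖ ≤ 1) :
    ‖Smap e x‖ ≤ 1 := by
  have h1 : ‖(1 - ‖x‖) • e 0‖ = 1 - ‖x‖ := by
    rw [norm_smul, he.1 0, mul_one, Real.norm_eq_abs, abs_of_nonneg (by linarith)]
  calc ‖Smap e x‖ ≤ ‖(1 - ‖x‖) • e 0‖ + ‖Uop e x‖ := norm_add_le _ _
    _ ≤ (1 - ‖x‖) + ‖x‖ := by rw [h1]; exact (add_le_add_iff_left _).2 (norm_Uop_le he x)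
    _ = 1 := by ring

lemma Smap_lip {e : ℕ → H} (he : Orthonormal ℝ e) (x y : H) :
    ‖Smap e x - Smap e y‖ ≤ 2 * ‖x - y‖ := by
  have h0 : Smap e x - Smap e y = (‖y‖ - ‖x‖) • e 0 + Uop e (x - y) := by
    rw [Uop_sub he]
    simp only [Smap, sub_smul, one_smul]
    abel
  rw [h0]
  have h1 : ‖(‖y‖ - ‖x‖) • e 0‖ ≤ ‖x - y‖ := by
    rw [norm_smul, he.1 0, mul_one, Real.norm_eq_abs, norm_sub_rev x y]
    exact abs_norm_sub_norm_le y x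
  calc _ ≤ ‖(‖y‖ - ‖x‖) • e 0‖ + ‖Uop e (x - y)‖ := norm_add_le _ _
    _ ≤ ‖x - y‖ + ‖x - y‖ := add_le_add h1 (norm_Uop_le he _)
    _ = 2 * ‖x - y‖ := by ring

lemma Smap_ne {e : ℕ → H} (he : Orthonormal ℝ e) {x : H} (hx : ‖x‖ ≤ 1) :
    Smap e x ≠ x := by
  intro hfix
  have hee : ∀ n m : ℕ, ⟪e n, e m⟫ = if n = m then (1:ℝ) else 0 := orthonormal_iff_ite.1 he
  have h0 : ⟪e 0, x⟫ = 1 - ‖x‖ := by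
    conv_lhs => rw [← hfix]
    rw [Smap, inner_add_right, real_inner_smul_right, hee, Uop_inner_zero he]
    simp
  have hsucc : ∀ n, ⟪e (n + 1), x⟫ = ⟪e n, x⟫ := by
    intro n
    conv_lhs => rw [← hfix]
    rw [Smap, inner_add_right, real_inner_smul_right, hee, Uop_inner_succ he]
    simp
  have hall : ∀ n, ⟪e n, x⟫ = 1 - ‖x‖ := by
    intro n; induction n with
    | zero => exact h0
    | succ k ih => rw [hsucc k, ih]
  have hsumm := he.inner_products_summable (x := x)
  have htend := hsumm.tendsto_atTop_zero
  have hconst : (fun n : ℕ => ‖⟪e n, x⟫‖ ^ 2) = fun _ => ‖1 - ‖x‖‖ ^ 2 := by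
    funext n; rw [hall n]
  rw [hconst] at htend
  have hx1 : ‖x‖ = 1 := by
    have := tendsto_nhds_unique htend tendsto_const_nhds
    have h2 : |1 - ‖x‖| = 0 := by
      rw [← Real.norm_eq_abs]; nlinarith [norm_nonneg (1 - ‖x‖)]
    have := abs_eq_zero.1 h2; linarith
  have hzero : ∀ n, ⟪e n, x⟫ = (0:ℝ) := by intro n; rw [hall n, hx1]; ring
  have hU : Uop e x = 0 := by
    refine (hasSum_Uop he x).unique ?_
    have : (fun n => ⟪e n, x⟫ • e (n + 1)) = fun _ => (0 : H) := by
      funext n; rw [hzero n, zero_smul]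
    rw [this]; exact hasSum_zero
  have : x = 0 := by
    rw [← hfix, Smap, hU, hx1]; simp
  rw [this, norm_zero] at hx1; norm_num at hx1

omit [CompleteSpace H] in
lemma norm_sum_sq {e : ℕ → H} (he : Orthonormal ℝ e) (k : ℕ) :
    ‖∑ n ∈ Finset.range k, e n‖ ^ 2 = (k : ℝ) := by
  have h := he.orthogonalFamily.norm_sum (fun _ => (1:ℝ)) (Finset.range k)
  simpa [LinearIsometry.toSpanSingleton_apply] using h

end

section
variable {H : Type*} [NormedAddCommGroup H] [InnerProductSpace ℝ H] [CompleteSpace H]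

omit [CompleteSpace H] in
lemma norm_u_eq {e : ℕ → H} (he : Orthonormal ℝ e) {m : ℕ} (hm : 1 ≤ m) :
    ‖(m:ℝ)⁻¹ • ∑ n ∈ Finset.range (m^2), e n‖ = 1 := by
  have hm' : (0:ℝ) < m := by exact_mod_cast hm
  have h1 : ‖(m:ℝ)⁻¹ • ∑ n ∈ Finset.range (m^2), e n‖ ^ 2 = 1 := by
    rw [norm_smul, mul_pow, norm_sum_sq he]
    rw [Real.norm_eq_abs, abs_of_nonneg (by positivity)]
    push_cast
    field_simp
  nlinarith [norm_nonneg ((m:ℝ)⁻¹ • ∑ n ∈ Finset.range (m^2), e n)]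

lemma Uop_u {e : ℕ → H} (he : Orthonormal ℝ e) (c : ℝ) (k : ℕ) :
    Uop e (c • ∑ n ∈ Finset.range k, e n) = c • ∑ n ∈ Finset.range k, e (n + 1) := by
  set u := c • ∑ n ∈ Finset.range k, e n with hu
  have hee : ∀ n m : ℕ, ⟪e n, e m⟫ = if n = m then (1:ℝ) else 0 := orthonormal_iff_ite.1 he
  have hcoef : ∀ n, ⟪e n, u⟫ = if n ∈ Finset.range k then c else 0 := by
    intro n
    rw [hu, real_inner_smul_right, inner_sum]
    simp only [hee]
    rw [Finset.sum_ite_eq]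
    split_ifs <;> simp
  refine (hasSum_Uop he u).unique ?_
  have h2 : ∀ n ∉ Finset.range k, ⟪e n, u⟫ • e (n + 1) = 0 := by
    intro n hn; rw [hcoef n, if_neg hn, zero_smul]
  have h3 : HasSum (fun n => ⟪e n, u⟫ • e (n + 1)) _ := hasSum_sum_of_ne_finset_zero h2
  convert h3 using 1
  rw [Finset.smul_sum]
  refine Finset.sum_congr rfl fun n hn => ?_
  rw [hcoef n, if_pos hn]

lemma u_displacement {e : ℕ → H} (he : Orthonormal ℝ e) {m : ℕ} (hm : 1 ≤ m) :
    ‖(m:ℝ)⁻¹ • (∑ n ∈ Finset.range (m^2), e n) -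
      Smap e ((m:ℝ)⁻¹ • ∑ n ∈ Finset.range (m^2), e n)‖ ≤ 2 / m := by
  have hm' : (0:ℝ) < m := by exact_mod_cast hm
  set u := (m:ℝ)⁻¹ • ∑ n ∈ Finset.range (m^2), e n with hu
  have hnu : ‖u‖ = 1 := norm_u_eq he hm
  have hS : Smap e u = (m:ℝ)⁻¹ • ∑ n ∈ Finset.range (m^2), e (n + 1) := by
    rw [Smap, hnu, hu, Uop_u he]
    simp
  have htel : (∑ n ∈ Finset.range (m^2), e (n + 1)) =
      (∑ n ∈ Finset.range (m^2), e n) + e (m^2) - e 0 := by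
    have h1 : ∑ n ∈ Finset.range (m^2 + 1), e n =
        (∑ n ∈ Finset.range (m^2), e (n + 1)) + e 0 := Finset.sum_range_succ' e _
    have h2 : ∑ n ∈ Finset.range (m^2 + 1), e n =
        (∑ n ∈ Finset.range (m^2), e n) + e (m^2) := Finset.sum_range_succ e _
    rw [h2] at h1
    rw [eq_sub_iff_add_eq, ← h1]
  have hdiff : u - Smap e u = (m:ℝ)⁻¹ • (e 0 - e (m^2)) := by
    rw [hS, hu, htel, ← smul_sub]
    congr 1
    abel
  rw [hdiff, norm_smul, Real.norm_eq_abs, abs_of_nonneg (by positivity)]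
  have : ‖e 0 - e (m^2)‖ ≤ 2 := by
    calc ‖e 0 - e (m^2)‖ ≤ ‖e 0‖ + ‖e (m^2)‖ := norm_sub_le _ _
      _ = 2 := by rw [he.1 0, he.1 (m^2)]; norm_num
  calc (m:ℝ)⁻¹ * ‖e 0 - e (m^2)‖ ≤ (m:ℝ)⁻¹ * 2 := by
        exact mul_le_mul_of_nonneg_left this (by positivity)
    _ = 2 / m := by field_simp
end

section
variable {H : Type*} [NormedAddCommGroup H] [InnerProductSpace ℝ H]

noncomputable def projB (r : ℝ) (x : H) : H := if ‖x‖ ≤ r then x else (r / ‖x‖) • x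

lemma projB_eq {r : ℝ} {x : H} (hx : ‖x‖ ≤ r) : projB r x = x := if_pos hx

lemma projB_norm_le {r : ℝ} (hr : 0 < r) (x : H) : ‖projB r x‖ ≤ r := by
  rw [projB]
  split_ifs with h
  · exact h
  · push_neg at h
    have hx0 : (0:ℝ) < ‖x‖ := lt_trans hr h
    rw [norm_smul, Real.norm_eq_abs, abs_of_nonneg (by positivity)]
    rw [div_mul_cancel₀ _ (ne_of_gt hx0)]

lemma projB_lip_aux {r : ℝ} (hr : 0 < r) {x y : H} (hx : ‖x‖ ≤ r) (hy : r < ‖y‖) :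
    ‖x - (r / ‖y‖) • y‖ ≤ 2 * ‖x - y‖ := by
  have hy0 : (0:ℝ) < ‖y‖ := lt_trans hr hy
  have h1 : ‖y - (r / ‖y‖) • y‖ = ‖y‖ - r := by
    have : y - (r / ‖y‖) • y = (1 - r / ‖y‖) • y := by
      rw [sub_smul, one_smul]
    rw [this, norm_smul, Real.norm_eq_abs, abs_of_nonneg, sub_mul, one_mul,
      div_mul_cancel₀ _ (ne_of_gt hy0)]
    rw [sub_nonneg, div_le_one hy0]
    exact le_of_lt hy
  calc ‖x - (r / ‖y‖) • y‖ ≤ ‖x - y‖ + ‖y - (r / ‖y‖) • y‖ := by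
        have := norm_add_le (x - y) (y - (r / ‖y‖) • y)
        simpa using this
    _ = ‖x - y‖ + (‖y‖ - r) := by rw [h1]
    _ ≤ ‖x - y‖ + (‖y‖ - ‖x‖) := by linarith
    _ ≤ ‖x - y‖ + ‖x - y‖ := by
        have := norm_sub_norm_le y x
        rw [norm_sub_rev y x] at this
        linarith
    _ = 2 * ‖x - y‖ := by ring

lemma projB_lip {r : ℝ} (hr : 0 < r) (x y : H) :
    ‖projB r x - projB r y‖ ≤ 2 * ‖x - y‖ := by
  rw [projB, projB]
  split_ifs with h1 h2 h2
  · linarith [norm_nonneg (x - y)]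
  · push_neg at h2
    exact projB_lip_aux hr h1 h2
  · push_neg at h1
    rw [norm_sub_rev, norm_sub_rev x y]
    exact projB_lip_aux hr h2 h1
  · push_neg at h1 h2
    have hx0 : (0:ℝ) < ‖x‖ := lt_trans hr h1
    have hy0 : (0:ℝ) < ‖y‖ := lt_trans hr h2
    have key : (r / ‖x‖) • x - (r / ‖y‖) • y
        = (r / ‖x‖) • (x - y) + (r / ‖x‖ - r / ‖y‖) • y := by
      rw [smul_sub, sub_smul]; abel
    rw [key]
    have hb1 : ‖(r / ‖x‖) • (x - y)‖ ≤ ‖x - y‖ := by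
      rw [norm_smul, Real.norm_eq_abs, abs_of_nonneg (by positivity)]
      have : r / ‖x‖ ≤ 1 := (div_le_one hx0).2 (le_of_lt h1)
      nlinarith [norm_nonneg (x - y)]
    have hb2 : ‖(r / ‖x‖ - r / ‖y‖) • y‖ ≤ ‖x - y‖ := by
      rw [norm_smul, Real.norm_eq_abs]
      have h5 : (r / ‖x‖ - r / ‖y‖) * ‖y‖ = r * (‖y‖ - ‖x‖) / ‖x‖ := by
        field_simp
      have heq : |r / ‖x‖ - r / ‖y‖| * ‖y‖ = r * |‖y‖ - ‖x‖| / ‖x‖ := by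
        calc |r / ‖x‖ - r / ‖y‖| * ‖y‖ = |(r / ‖x‖ - r / ‖y‖) * ‖y‖| := by
              rw [abs_mul, abs_of_nonneg (norm_nonneg y)]
          _ = |r * (‖y‖ - ‖x‖) / ‖x‖| := by rw [h5]
          _ = r * |‖y‖ - ‖x‖| / ‖x‖ := by
              rw [abs_div, abs_mul, abs_of_nonneg hr.le, abs_of_nonneg hx0.le]
      have h3 : |‖y‖ - ‖x‖| ≤ ‖x - y‖ := by
        rw [abs_sub_comm]
        exact abs_norm_sub_norm_le x y
      rw [heq, div_le_iff₀ hx0]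
      nlinarith [abs_nonneg (‖y‖ - ‖x‖), norm_nonneg (x - y)]
    calc ‖(r / ‖x‖) • (x - y) + (r / ‖x‖ - r / ‖y‖) • y‖
        ≤ ‖(r / ‖x‖) • (x - y)‖ + ‖(r / ‖x‖ - r / ‖y‖) • y‖ := norm_add_le _ _
      _ ≤ ‖x - y‖ + ‖x - y‖ := add_le_add hb1 hb2
      _ = 2 * ‖x - y‖ := by ring
end

lemma holder_key {α lam : ℝ} (hα : 0 < α) (hα1 : α < 1) (hlam : 0 < lam) :
    ∃ r : ℝ, 0 < r ∧ r ≤ 1 ∧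
      ∀ d : ℝ, 0 ≤ d → min (2 * r) (4 * d) ≤ lam * d ^ α := by
  have h1α : (0:ℝ) < 1 - α := by linarith
  refine ⟨min 1 ((lam / 2) * (lam / 4) ^ (α / (1 - α))), ?_, min_le_left _ _, ?_⟩
  · have : (0:ℝ) < (lam / 4) ^ (α / (1 - α)) := Real.rpow_pos_of_pos (by linarith) _
    positivity
  · set r := min 1 ((lam / 2) * (lam / 4) ^ (α / (1 - α))) with hr
    have hrpos : 0 < r := by
      have : (0:ℝ) < (lam / 4) ^ (α / (1 - α)) := Real.rpow_pos_of_pos (by linarith) _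
      positivity
    intro d hd
    rcases eq_or_lt_of_le hd with h0 | hdpos
    · rw [← h0, Real.zero_rpow (ne_of_gt hα), mul_zero, mul_zero]
      exact min_le_of_right_le (by norm_num)
    set δ := (2 * r / lam) ^ (α⁻¹) with hδ
    have hbase : 0 < 2 * r / lam := by positivity
    have hδpos : 0 < δ := Real.rpow_pos_of_pos hbase _
    have hδα : lam * δ ^ α = 2 * r := by
      rw [hδ, ← Real.rpow_mul hbase.le, inv_mul_cancel₀ (ne_of_gt hα), Real.rpow_one]
      field_simp
    rcases le_or_gt δ d with hcase | hcase
    · refine min_le_of_left_le ?_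
      rw [← hδα]
      exact mul_le_mul_of_nonneg_left
        (Real.rpow_le_rpow hδpos.le hcase hα.le) hlam.le
    · refine min_le_of_right_le ?_
      have hr2 : 2 * r / lam ≤ (lam / 4) ^ (α / (1 - α)) := by
        have h6 : r ≤ (lam / 2) * (lam / 4) ^ (α / (1 - α)) := min_le_right _ _
        rw [div_le_iff₀ hlam]
        calc 2 * r ≤ 2 * ((lam / 2) * (lam / 4) ^ (α / (1 - α))) := by linarith
          _ = (lam / 4) ^ (α / (1 - α)) * lam := by ring
      have hδle : δ ≤ (lam / 4) ^ ((1 - α)⁻¹) := by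
        calc δ ≤ ((lam / 4) ^ (α / (1 - α))) ^ (α⁻¹) :=
              Real.rpow_le_rpow hbase.le hr2 (by positivity)
          _ = (lam / 4) ^ ((1 - α)⁻¹) := by
              rw [← Real.rpow_mul (by linarith : (0:ℝ) ≤ lam / 4)]
              congr 1
              field_simp
      have hkey : 4 * δ ^ (1 - α) ≤ lam := by
        calc 4 * δ ^ (1 - α) ≤ 4 * ((lam / 4) ^ ((1 - α)⁻¹)) ^ (1 - α) := by
              have := Real.rpow_le_rpow hδpos.le hδle h1α.le
              linarith
          _ = 4 * (lam / 4) := by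
              rw [← Real.rpow_mul (by linarith : (0:ℝ) ≤ lam / 4),
                inv_mul_cancel₀ (ne_of_gt h1α), Real.rpow_one]
          _ = lam := by ring
      have hdd : d ^ (1 - α) * d ^ α = d := by
        rw [← Real.rpow_add hdpos]
        norm_num
      have hmono : d ^ (1 - α) ≤ δ ^ (1 - α) :=
        Real.rpow_le_rpow hd hcase.le h1α.le
      have hdα : (0:ℝ) ≤ d ^ α := Real.rpow_nonneg hd _
      calc 4 * d = 4 * (d ^ (1 - α) * d ^ α) := by rw [hdd]
        _ ≤ lam * d ^ α := by nlinarith [Real.rpow_nonneg hd (1 - α)]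

/-- Let `H` be an infinite-dimensional real Hilbert space.  Then for every
`α ∈ (0,1)` and `λ > 0` there exists a fixed-point-free `α`-Hölder `λ`-Lipschitz map
`T : B_H → B_H` with `d(T, B_H) = 0`. -/
theorem statement16 {H : Type*} [NormedAddCommGroup H] [InnerProductSpace ℝ H]
    [CompleteSpace H] (hinf : ¬ FiniteDimensional ℝ H)
    (α : ℝ) (hα : α ∈ Set.Ioo (0 : ℝ) 1) (lam : ℝ) (hlam : 0 < lam) :
    ∃ T : H → H,
      Set.MapsTo T (Metric.closedBall (0 : H) 1) (Metric.closedBall (0 : H) 1) ∧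
      (∀ y ∈ Metric.closedBall (0 : H) 1, T y ≠ y) ∧
      (∀ y ∈ Metric.closedBall (0 : H) 1, ∀ z ∈ Metric.closedBall (0 : H) 1,
        ‖T y - T z‖ ≤ lam * ‖y - z‖ ^ α) ∧
      sInf ((fun y => ‖y - T y‖) '' Metric.closedBall (0 : H) 1) = 0 := by
  obtain ⟨hα0, hα1⟩ := hα
  -- obtain an orthonormal sequence
  obtain ⟨w, b, hb⟩ := exists_hilbertBasis ℝ H
  have hw : w.Infinite := by
    by_contra hfin
    rw [Set.not_infinite] at hfin
    apply hinf
    have hdense := b.dense_span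
    rw [hb, Subtype.range_coe] at hdense
    have hfd : FiniteDimensional ℝ (Submodule.span ℝ w) :=
      FiniteDimensional.span_of_finite ℝ hfin
    have hclosed : IsClosed ((Submodule.span ℝ w : Submodule ℝ H) : Set H) :=
      Submodule.closed_of_finiteDimensional _
    have htop : (Submodule.span ℝ w : Submodule ℝ H) = ⊤ := by
      rw [← hclosed.submodule_topologicalClosure_eq, hdense]
    rw [htop] at hfd
    exact Module.Finite.equiv (Submodule.topEquiv (R := ℝ) (M := H))
  set emb := hw.natEmbedding with hemb
  set e : ℕ → H := fun n => ((emb n : w) : H) with he_def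
  have he : Orthonormal ℝ e := by
    have hbo := b.orthonormal
    rw [hb] at hbo
    exact hbo.comp emb emb.injective
  obtain ⟨r, hrpos, hr1, hkey⟩ := holder_key hα0 hα1 hlam
  set T : H → H := fun x => r • Smap e (r⁻¹ • projB r x) with hT
  have harg : ∀ x : H, ‖r⁻¹ • projB r x‖ ≤ 1 := by
    intro x
    rw [norm_smul, Real.norm_eq_abs, abs_of_nonneg (by positivity)]
    calc r⁻¹ * ‖projB r x‖ ≤ r⁻¹ * r :=
          mul_le_mul_of_nonneg_left (projB_norm_le hrpos x) (by positivity)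
      _ = 1 := inv_mul_cancel₀ hrpos.ne'
  have hTnorm : ∀ x : H, ‖T x‖ ≤ r := by
    intro x
    rw [hT]
    simp only []
    rw [norm_smul, Real.norm_eq_abs, abs_of_nonneg hrpos.le]
    nlinarith [norm_Smap_le he (harg x)]
  refine ⟨T, ?_, ?_, ?_, ?_⟩
  · intro x _
    rw [Metric.mem_closedBall, dist_zero_right]
    exact (hTnorm x).trans hr1
  · intro y hy
    rw [Metric.mem_closedBall, dist_zero_right] at hy
    by_cases hyr : ‖y‖ ≤ r
    · intro hfix
      have hproj : projB r y = y := projB_eq hyr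
      have hv : ‖r⁻¹ • y‖ ≤ 1 := by
        have h4 := harg y
        rwa [hproj] at h4
      apply Smap_ne he hv
      apply smul_right_injective H hrpos.ne'
      rw [hT] at hfix
      simp only [] at hfix
      rw [hproj] at hfix
      show r • Smap e (r⁻¹ • y) = r • (r⁻¹ • y)
      rw [hfix, smul_inv_smul₀ hrpos.ne']
    · intro hfix
      have h5 := hTnorm y
      rw [hfix] at h5
      push_neg at hyr
      linarith
  · intro y _ z _
    have hb1 : ‖T y - T z‖ ≤ 2 * r := by
      calc ‖T y - T z‖ ≤ ‖T y‖ + ‖T z‖ := norm_sub_le _ _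
        _ ≤ r + r := add_le_add (hTnorm y) (hTnorm z)
        _ = 2 * r := by ring
    have hb2 : ‖T y - T z‖ ≤ 4 * ‖y - z‖ := by
      have hw12 : ‖(r⁻¹ • projB r y) - (r⁻¹ • projB r z)‖ ≤ r⁻¹ * (2 * ‖y - z‖) := by
        rw [← smul_sub, norm_smul, Real.norm_eq_abs, abs_of_nonneg (by positivity)]
        exact mul_le_mul_of_nonneg_left (projB_lip hrpos y z) (by positivity)
      calc ‖T y - T z‖ = r * ‖Smap e (r⁻¹ • projB r y) - Smap e (r⁻¹ • projB r z)‖ := by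
            rw [hT]
            simp only []
            rw [← smul_sub, norm_smul, Real.norm_eq_abs, abs_of_nonneg hrpos.le]
        _ ≤ r * (2 * ‖(r⁻¹ • projB r y) - (r⁻¹ • projB r z)‖) :=
            mul_le_mul_of_nonneg_left (Smap_lip he _ _) hrpos.le
        _ ≤ r * (2 * (r⁻¹ * (2 * ‖y - z‖))) := by
            have h6 := mul_le_mul_of_nonneg_left hw12 (by norm_num : (0:ℝ) ≤ 2)
            exact mul_le_mul_of_nonneg_left h6 hrpos.le
        _ = 4 * ‖y - z‖ := by field_simp; ring
    exact le_trans (le_min hb1 hb2) (hkey ‖y - z‖ (norm_nonneg _))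
  · set A := (fun y => ‖y - T y‖) '' Metric.closedBall (0:H) 1 with hA
    have hA0 : ∀ a ∈ A, (0:ℝ) ≤ a := by
      rintro a ⟨x, _, rfl⟩
      exact norm_nonneg _
    have hne : A.Nonempty := ⟨_, ⟨0, by simp, rfl⟩⟩
    have hbdd : BddBelow A := ⟨0, fun a ha => hA0 a ha⟩
    refine le_antisymm ?_ (le_csInf hne hA0)
    refine ge_of_tendsto (tendsto_const_div_atTop_nhds_zero_nat 2) ?_
    filter_upwards [eventually_ge_atTop 1] with m hm
    have hm' : (0:ℝ) < m := by exact_mod_cast hm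
    set u := (m:ℝ)⁻¹ • ∑ n ∈ Finset.range (m^2), e n with hu
    have hu1 : ‖u‖ = 1 := norm_u_eq he hm
    have hru : ‖r • u‖ = r := by
      rw [norm_smul, Real.norm_eq_abs, abs_of_nonneg hrpos.le, hu1, mul_one]
    have hxmem : r • u ∈ Metric.closedBall (0:H) 1 := by
      rw [Metric.mem_closedBall, dist_zero_right, hru]
      exact hr1
    have hval : ‖r • u - T (r • u)‖ ≤ 2 / m := by
      have hproj : projB r (r • u) = r • u := projB_eq (le_of_eq hru)
      rw [hT]
      simp only []
      rw [hproj, inv_smul_smul₀ hrpos.ne', ← smul_sub, norm_smul, Real.norm_eq_abs,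
        abs_of_nonneg hrpos.le]
      calc r * ‖u - Smap e u‖ ≤ 1 * (2 / m) := by
            have h7 := u_displacement he hm
            have h8 : (0:ℝ) ≤ ‖u - Smap e u‖ := norm_nonneg _
            nlinarith
        _ = 2 / m := one_mul _
    exact le_trans (csInf_le hbdd ⟨r • u, hxmem, rfl⟩) hval
end

section
/- Let X be an infinite-dimensional real Banach space and let (r_n)_{n≥1} be a decreasing null sequence of positive reals satisfying r_{n+k} ≤ r_n · r_k for all n, k ∈ ℕ. Then there exist a nonempty bounded closed convex set K ⊆ B_X that is (r_n)-flat and a fixed-point-free affine map F : K → K such that ‖Fⁿ x − Fⁿ y‖ ≤ r_n (‖x − y‖ + 1) for all x, y ∈ K and all n ∈ ℕ. -/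
open Metric Set Filter Topology

section Construction

variable {X : Type*} [NormedAddCommGroup X] [NormedSpace ℝ X]

def Dset : Set (ℕ → ℝ) := {t | (∀ k, 0 ≤ t k) ∧ ∀ s : Finset ℕ, ∑ k ∈ s, t k ≤ 1}

def vv (r : ℕ → ℝ) (e : ℕ → X) (c : ℝ) (k : ℕ) : X := (c * r (k + 1)) • e k

noncomputable def Ph (r : ℕ → ℝ) (e : ℕ → X) (c : ℝ) (t : ℕ → ℝ) : X :=
  ∑' k, t k • vv r e c k

noncomputable def Sm (t : ℕ → ℝ) : ℕ → ℝ :=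
  fun k => if k = 0 then 1 - ∑' j, t j else t (k - 1)

noncomputable def Wn (n : ℕ) (t : ℕ → ℝ) : ℕ → ℝ := fun k =>
  if k + 1 < n then 0 else if k + 1 = n then 1 - ∑' j, t j else t (k - n)

noncomputable def cf (r : ℕ → ℝ) (c : ℝ) (f : ℕ → X →L[ℝ] ℝ) (x : X) (j : ℕ) : ℝ :=
  f j x / (c * r (j + 1))

noncomputable def Fm (r : ℕ → ℝ) (e : ℕ → X) (c : ℝ) (f : ℕ → X →L[ℝ] ℝ) (x : X) : X :=
  (1 - ∑' j, cf r c f x j) • vv r e c 0 + ∑' j, cf r c f x j • vv r e c (j + 1)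

structure Nice (r : ℕ → ℝ) (e : ℕ → X) (c : ℝ) (f : ℕ → X →L[ℝ] ℝ) : Prop where
  rpos : ∀ n, 1 ≤ n → 0 < r n
  rdec : ∀ m n, 1 ≤ m → m ≤ n → r n ≤ r m
  he : ∀ k, ‖e k‖ ≤ 1
  bi : ∀ j k, f j (e k) = if j = k then 1 else 0
  hc0 : 0 < c
  hc1 : c * r 1 ≤ 1
  hc2 : c ≤ 1 / 2

variable {r : ℕ → ℝ} {e : ℕ → X} {c : ℝ} {f : ℕ → X →L[ℝ] ℝ}

lemma Nice.crpos (hn : Nice r e c f) (k : ℕ) : 0 < c * r (k + 1) :=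
  mul_pos hn.hc0 (hn.rpos _ (by omega))

lemma Nice.vv_norm (hn : Nice r e c f) (k : ℕ) : ‖vv r e c k‖ ≤ c * r (k + 1) := by
  rw [vv, norm_smul, Real.norm_eq_abs, abs_of_pos (hn.crpos k)]
  nlinarith [hn.he k, (hn.crpos k), norm_nonneg (e k)]

lemma Nice.vv_norm1 (hn : Nice r e c f) (k : ℕ) : ‖vv r e c k‖ ≤ c * r 1 :=
  (hn.vv_norm k).trans (by
    have := hn.rdec 1 (k+1) le_rfl (by omega)
    nlinarith [hn.hc0])

lemma D_summable {t : ℕ → ℝ} (ht : t ∈ Dset) : Summable t :=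
  summable_of_sum_range_le ht.1 fun n => ht.2 (Finset.range n)

lemma D_tsum_le {t : ℕ → ℝ} (ht : t ∈ Dset) : ∑' k, t k ≤ 1 :=
  Real.tsum_le_of_sum_range_le ht.1 fun n => ht.2 (Finset.range n)

lemma D_tsum_nonneg {t : ℕ → ℝ} (ht : t ∈ Dset) : 0 ≤ ∑' k, t k :=
  tsum_nonneg ht.1

lemma D_zero : (fun _ : ℕ => (0:ℝ)) ∈ Dset :=
  ⟨fun _ => le_rfl, fun s => by simp⟩

lemma summable_vv [CompleteSpace X] (hn : Nice r e c f) {d : ℕ → ℝ} (hd : Summable d)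
    (g : ℕ → ℕ) : Summable fun k => d k • vv r e c (g k) := by
  apply Summable.of_norm_bounded (g := fun k => |d k| * (c * r 1)) (hd.abs.mul_right _)
  intro k
  rw [norm_smul, Real.norm_eq_abs]
  exact mul_le_mul_of_nonneg_left (hn.vv_norm1 (g k)) (abs_nonneg _)

lemma summable_vv0 [CompleteSpace X] (hn : Nice r e c f) {d : ℕ → ℝ} (hd : Summable d) :
    Summable fun k => d k • vv r e c k := by
  simpa using summable_vv hn hd id

lemma cf_Ph [CompleteSpace X] (hn : Nice r e c f) {t : ℕ → ℝ} (ht : t ∈ Dset) (j : ℕ) :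
    cf r c f (Ph r e c t) j = t j := by
  have hs : Summable fun k => t k • vv r e c k := summable_vv hn (D_summable ht) id
  have hfj : f j (Ph r e c t) = t j * (c * r (j + 1)) := by
    rw [Ph, (f j).map_tsum hs, tsum_eq_single j]
    · simp [vv, map_smul, hn.bi]
    · intro k hk
      simp [vv, map_smul, hn.bi, (Ne.symm hk : j ≠ k)]
  rw [cf, hfj, mul_div_cancel_right₀ _ (hn.crpos j).ne']


lemma Ph_sub [CompleteSpace X] (hn : Nice r e c f) {a b : ℕ → ℝ}
    (hA : Summable a) (hB : Summable b) :
    Ph r e c a - Ph r e c b = ∑' k, (a k - b k) • vv r e c k := by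
  rw [Ph, Ph, ← Summable.tsum_sub (summable_vv0 hn hA) (summable_vv0 hn hB)]
  congr 1
  funext k
  rw [sub_smul]

lemma Ph_norm [CompleteSpace X] (hn : Nice r e c f) {t : ℕ → ℝ} (ht : t ∈ Dset) :
    ‖Ph r e c t‖ ≤ c * r 1 := by
  have hs := D_summable ht
  have hterm : ∀ k, ‖t k • vv r e c k‖ ≤ t k * (c * r 1) := by
    intro k
    rw [norm_smul, Real.norm_eq_abs, abs_of_nonneg (ht.1 k)]
    exact mul_le_mul_of_nonneg_left (hn.vv_norm1 k) (ht.1 k)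
  have hsn : Summable fun k => ‖t k • vv r e c k‖ :=
    Summable.of_nonneg_of_le (fun k => norm_nonneg _) hterm (hs.mul_right _)
  calc ‖Ph r e c t‖ ≤ ∑' k, ‖t k • vv r e c k‖ := norm_tsum_le_tsum_norm hsn
    _ ≤ ∑' k, t k * (c * r 1) := Summable.tsum_le_tsum hterm hsn (hs.mul_right _)
    _ = (∑' k, t k) * (c * r 1) := tsum_mul_right
    _ ≤ 1 * (c * r 1) := by
        have := D_tsum_le ht
        nlinarith [hn.crpos 0]
    _ = c * r 1 := one_mul _

lemma Ph_tail [CompleteSpace X] (hn : Nice r e c f) {t : ℕ → ℝ} (ht : t ∈ Dset) (N : ℕ) :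
    ‖Ph r e c t - ∑ k ∈ Finset.range N, t k • vv r e c k‖ ≤ c * r (N + 1) := by
  have hs : Summable fun k => t k • vv r e c k := summable_vv hn (D_summable ht) id
  have hsplit := Summable.sum_add_tsum_nat_add N hs
  have hEq : Ph r e c t - ∑ k ∈ Finset.range N, t k • vv r e c k
      = ∑' k, t (k + N) • vv r e c (k + N) := by
    rw [Ph, ← hsplit]; abel
  rw [hEq]
  have hTs : Summable fun k => t (k + N) := (summable_nat_add_iff N).2 (D_summable ht)
  have hterm : ∀ k, ‖t (k + N) • vv r e c (k + N)‖ ≤ t (k + N) * (c * r (N + 1)) := by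
    intro k
    rw [norm_smul, Real.norm_eq_abs, abs_of_nonneg (ht.1 _)]
    refine mul_le_mul_of_nonneg_left ((hn.vv_norm _).trans ?_) (ht.1 _)
    have := hn.rdec (N + 1) (k + N + 1) (by omega) (by omega)
    nlinarith [hn.hc0]
  have hsn : Summable fun k => ‖t (k + N) • vv r e c (k + N)‖ :=
    Summable.of_nonneg_of_le (fun k => norm_nonneg _) hterm (hTs.mul_right _)
  have htail_le : ∑' k, t (k + N) ≤ 1 := by
    apply Real.tsum_le_of_sum_range_le (fun k => ht.1 _)
    intro n
    have himg : ∑ i ∈ Finset.range n, t (i + N) = ∑ j ∈ (Finset.range n).image (· + N), t j :=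
      (Finset.sum_image (by intro a _ b _ h; simp only at h; omega)).symm
    rw [himg]; exact ht.2 _
  calc ‖∑' k, t (k + N) • vv r e c (k + N)‖ ≤ ∑' k, ‖t (k + N) • vv r e c (k + N)‖ :=
        norm_tsum_le_tsum_norm hsn
    _ ≤ ∑' k, t (k + N) * (c * r (N + 1)) := Summable.tsum_le_tsum hterm hsn (hTs.mul_right _)
    _ = (∑' k, t (k + N)) * (c * r (N + 1)) := tsum_mul_right
    _ ≤ 1 * (c * r (N + 1)) := by nlinarith [hn.crpos N]
    _ = c * r (N + 1) := one_mul _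

lemma D_convex {a b : ℕ → ℝ} (ha : a ∈ Dset) (hb : b ∈ Dset) {s : ℝ}
    (h0 : 0 ≤ s) (h1 : s ≤ 1) : (fun k => (1 - s) * a k + s * b k) ∈ Dset := by
  constructor
  · intro k
    have h2 := mul_nonneg (by linarith : (0:ℝ) ≤ 1 - s) (ha.1 k)
    have h3 := mul_nonneg h0 (hb.1 k)
    show (0:ℝ) ≤ (1 - s) * a k + s * b k
    linarith
  · intro F
    rw [Finset.sum_add_distrib, ← Finset.mul_sum, ← Finset.mul_sum]
    nlinarith [ha.2 F, hb.2 F, Finset.sum_nonneg (fun k (_ : k ∈ F) => ha.1 k),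
      Finset.sum_nonneg (fun k (_ : k ∈ F) => hb.1 k)]

lemma Ph_combo [CompleteSpace X] (hn : Nice r e c f) {a b : ℕ → ℝ}
    (ha : Summable a) (hb : Summable b) (s : ℝ) :
    Ph r e c (fun k => (1 - s) * a k + s * b k) = (1 - s) • Ph r e c a + s • Ph r e c b := by
  have hA := summable_vv0 hn ha
  have hB := summable_vv0 hn hb
  rw [Ph, Ph, Ph,
    show (fun k => ((1 - s) * a k + s * b k) • vv r e c k)
      = fun k => (1 - s) • (a k • vv r e c k) + s • (b k • vv r e c k) from
      funext fun k => by rw [add_smul, mul_smul, mul_smul],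
    Summable.tsum_add (hA.const_smul _) (hB.const_smul _), Summable.tsum_const_smul _ hA, Summable.tsum_const_smul _ hB]

lemma Sm_mem {t : ℕ → ℝ} (ht : t ∈ Dset) : Sm t ∈ Dset := by
  have h1 : ∑' k, t k ≤ 1 := D_tsum_le ht
  have h0 : (0:ℝ) ≤ ∑' k, t k := D_tsum_nonneg ht
  have hnn : ∀ k, 0 ≤ Sm t k := by
    intro k
    cases k with
    | zero => simp [Sm]; linarith
    | succ m => simpa [Sm] using ht.1 m
  refine ⟨hnn, ?_⟩
  intro s
  obtain ⟨N, hN⟩ := s.exists_nat_subset_range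
  have hsub : ∑ k ∈ s, Sm t k ≤ ∑ k ∈ Finset.range N, Sm t k :=
    Finset.sum_le_sum_of_subset_of_nonneg hN (fun k _ _ => hnn k)
  refine hsub.trans ?_
  cases N with
  | zero => simp
  | succ M =>
    rw [Finset.sum_range_succ']
    have h2 : ∑ i ∈ Finset.range M, Sm t (i + 1) = ∑ i ∈ Finset.range M, t i :=
      Finset.sum_congr rfl fun i _ => by simp [Sm]
    have h3 : ∑ i ∈ Finset.range M, t i ≤ ∑' k, t k :=
      Summable.sum_le_tsum _ (fun i _ => ht.1 i) (D_summable ht)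
    have h4 : Sm t 0 = 1 - ∑' j, t j := by simp [Sm]
    rw [h2, h4]
    linarith

lemma Sm_tsum {t : ℕ → ℝ} (ht : t ∈ Dset) : ∑' k, Sm t k = 1 := by
  have hs : Summable (Sm t) := D_summable (Sm_mem ht)
  rw [Summable.tsum_eq_zero_add hs]
  have h2 : ∑' (b : ℕ), Sm t (b + 1) = ∑' b, t b := by
    apply tsum_congr; intro b; simp [Sm]
  have h4 : Sm t 0 = 1 - ∑' j, t j := by simp [Sm]
  rw [h2, h4]
  ring

lemma Fm_Ph [CompleteSpace X] (hn : Nice r e c f) {t : ℕ → ℝ} (ht : t ∈ Dset) :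
    Fm r e c f (Ph r e c t) = Ph r e c (Sm t) := by
  have hcf : ∀ j, cf r c f (Ph r e c t) j = t j := cf_Ph hn ht
  have hsm : Summable fun k => Sm t k • vv r e c k :=
    summable_vv0 hn (D_summable (Sm_mem ht))
  rw [Fm]
  simp only [hcf]
  rw [show Ph r e c (Sm t) = ∑' k, Sm t k • vv r e c k from rfl, Summable.tsum_eq_zero_add hsm]
  have h1 : Sm t 0 = 1 - ∑' j, t j := by simp [Sm]
  have h2 : ∑' (b : ℕ), Sm t (b + 1) • vv r e c (b + 1) = ∑' (b : ℕ), t b • vv r e c (b + 1) :=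
    tsum_congr fun b => by simp [Sm]
  rw [h1, h2]


lemma Wn_one (t : ℕ → ℝ) : Wn 1 t = Sm t := by
  funext k
  cases k with
  | zero => simp [Wn, Sm]
  | succ m => simp [Wn, Sm]

lemma Wn_succ {t : ℕ → ℝ} (n : ℕ) (hn1 : 1 ≤ n) (htsum : ∑' k, Wn n t k = 1) :
    Wn (n + 1) t = Sm (Wn n t) := by
  funext k
  cases k with
  | zero =>
    have l : Wn (n + 1) t 0 = 0 := by
      have h1 : 0 + 1 < n + 1 := by omega
      simp only [Wn, if_pos h1]
    have rr : Sm (Wn n t) 0 = 0 := by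
      simp only [Sm, if_pos rfl, htsum]
      norm_num
    rw [l, rr]
  | succ m =>
    simp only [Wn, Sm, Nat.succ_ne_zero, if_false,
      show (m + 1 + 1 < n + 1) = (m + 1 < n) from by simp [Nat.add_lt_add_iff_right],
      show (m + 1 + 1 = n + 1) = (m + 1 = n) from by simp,
      show m + 1 - (n + 1) = m - n from by omega, Nat.add_sub_cancel]

lemma Fm_iter [CompleteSpace X] (hn : Nice r e c f) {t : ℕ → ℝ} (ht : t ∈ Dset) :
    ∀ n, 1 ≤ n → (Fm r e c f)^[n] (Ph r e c t) = Ph r e c (Wn n t) ∧ Wn n t ∈ Dset ∧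
      ∑' k, Wn n t k = 1 := by
  intro n hn1
  induction n with
  | zero => omega
  | succ m IH =>
    rcases Nat.eq_zero_or_pos m with hm | hm
    · subst hm
      exact ⟨by rw [Function.iterate_one, Fm_Ph hn ht, Wn_one],
        by rw [Wn_one]; exact Sm_mem ht, by rw [Wn_one]; exact Sm_tsum ht⟩
    · obtain ⟨hiter, hmem, hts⟩ := IH hm
      have hW := Wn_succ (t := t) m hm hts
      refine ⟨?_, ?_, ?_⟩
      · rw [Function.iterate_succ_apply', hiter, Fm_Ph hn hmem, hW]
      · rw [hW]; exact Sm_mem hmem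
      · rw [hW]; exact Sm_tsum hmem

lemma Fm_iter_bound [CompleteSpace X] (hn : Nice r e c f) {a b : ℕ → ℝ}
    (ha : a ∈ Dset) (hb : b ∈ Dset) {n : ℕ} (hn1 : 1 ≤ n) :
    ‖(Fm r e c f)^[n] (Ph r e c a) - (Fm r e c f)^[n] (Ph r e c b)‖ ≤ 2 * (c * r n) := by
  obtain ⟨hA, hAm, hAs⟩ := Fm_iter hn ha n hn1
  obtain ⟨hB, hBm, hBs⟩ := Fm_iter hn hb n hn1
  rw [hA, hB, Ph_sub hn (D_summable hAm) (D_summable hBm)]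
  have hSA := D_summable hAm
  have hSB := D_summable hBm
  have key : ∀ k, ‖(Wn n a k - Wn n b k) • vv r e c k‖ ≤ (Wn n a k + Wn n b k) * (c * r n) := by
    intro k
    by_cases hk : k + 1 < n
    · have e1 : Wn n a k = 0 := by simp [Wn, hk]
      have e2 : Wn n b k = 0 := by simp [Wn, hk]
      simp [e1, e2]
    · have h1 : ‖(Wn n a k - Wn n b k) • vv r e c k‖
          = |Wn n a k - Wn n b k| * ‖vv r e c k‖ := by
        rw [norm_smul, Real.norm_eq_abs]
      rw [h1]
      have h2 : |Wn n a k - Wn n b k| ≤ Wn n a k + Wn n b k := by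
        have := hAm.1 k; have := hBm.1 k
        rw [abs_sub_le_iff]; constructor <;> linarith
      have h3 : ‖vv r e c k‖ ≤ c * r n := by
        refine (hn.vv_norm k).trans ?_
        have := hn.rdec n (k + 1) hn1 (by omega)
        nlinarith [hn.hc0]
      have h4 := (abs_nonneg (Wn n a k - Wn n b k)).trans h2
      exact mul_le_mul h2 h3 (norm_nonneg _) h4
  have hsum2 : Summable fun k => (Wn n a k + Wn n b k) * (c * r n) := (hSA.add hSB).mul_right _
  have hsn : Summable fun k => ‖(Wn n a k - Wn n b k) • vv r e c k‖ :=
    Summable.of_nonneg_of_le (fun k => norm_nonneg _) key hsum2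
  calc ‖∑' k, (Wn n a k - Wn n b k) • vv r e c k‖
      ≤ ∑' k, ‖(Wn n a k - Wn n b k) • vv r e c k‖ := norm_tsum_le_tsum_norm hsn
    _ ≤ ∑' k, (Wn n a k + Wn n b k) * (c * r n) := Summable.tsum_le_tsum key hsn hsum2
    _ = (∑' k, (Wn n a k + Wn n b k)) * (c * r n) := tsum_mul_right
    _ = 2 * (c * r n) := by rw [Summable.tsum_add hSA hSB, hAs, hBs]; norm_num

lemma Fm_fpf [CompleteSpace X] (hn : Nice r e c f) {t : ℕ → ℝ} (ht : t ∈ Dset) :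
    Fm r e c f (Ph r e c t) ≠ Ph r e c t := by
  intro hEq
  rw [Fm_Ph hn ht] at hEq
  have hcoef : ∀ k, Sm t k = t k := by
    intro k
    calc Sm t k = cf r c f (Ph r e c (Sm t)) k := (cf_Ph hn (Sm_mem ht) k).symm
      _ = cf r c f (Ph r e c t) k := by rw [hEq]
      _ = t k := cf_Ph hn ht k
  have hconst : ∀ k, t k = t 0 := by
    intro k
    induction k with
    | zero => rfl
    | succ m IH =>
      have h1 := hcoef (m + 1)
      simp only [Sm, Nat.succ_ne_zero, if_false, Nat.add_sub_cancel] at h1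
      rw [← h1, IH]
  have h0 : t 0 = 0 := by
    have hlim : Tendsto t atTop (nhds 0) := (D_summable ht).tendsto_atTop_zero
    have hlim2 : Tendsto t atTop (nhds (t 0)) := by
      rw [show t = fun _ => t 0 from funext hconst]
      exact tendsto_const_nhds
    exact tendsto_nhds_unique hlim2 hlim
  have htz : ∑' k, t k = 0 := by
    rw [show t = fun _ => (0:ℝ) from funext fun k => (hconst k).trans h0]
    exact tsum_zero
  have h5 := hcoef 0
  simp only [Sm, if_pos rfl] at h5
  rw [htz, h0] at h5
  norm_num at h5


lemma exists_next [CompleteSpace X] (hinf : ¬ FiniteDimensional ℝ X)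
    {n : ℕ} (E : Fin n → X) (F : Fin n → X →L[ℝ] ℝ)
    (hbi : ∀ i j, F i (E j) = if i = j then 1 else 0) :
    ∃ (x : X) (φ : X →L[ℝ] ℝ), ‖x‖ ≤ 1 ∧ (∀ i, F i x = 0) ∧ (∀ i, φ (E i) = 0) ∧ φ x = 1 := by
  set W : Submodule ℝ X := Submodule.span ℝ (Set.range E) with hW
  haveI : FiniteDimensional ℝ W := FiniteDimensional.span_of_finite ℝ (Set.finite_range E)
  have hz : ∃ z : X, z ∉ W := by
    by_contra h
    push_neg at h
    have htop : W = ⊤ := Submodule.eq_top_iff'.mpr h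
    haveI : FiniteDimensional ℝ (⊤ : Submodule ℝ X) := htop ▸ inferInstance
    exact hinf (Submodule.topEquiv.finiteDimensional)
  obtain ⟨z, hz⟩ := hz
  set y : X := z - ∑ i, F i z • E i with hy
  have hyW : y ∉ W := by
    intro hmem
    apply hz
    have hsW : (∑ i, F i z • E i) ∈ W :=
      Submodule.sum_mem _ fun i _ => Submodule.smul_mem _ _ (Submodule.subset_span ⟨i, rfl⟩)
    have hzy : z = y + ∑ i, F i z • E i := by rw [hy]; abel
    rw [hzy]
    exact Submodule.add_mem _ hmem hsW
  have hy0 : y ≠ 0 := fun h => hyW (h ▸ W.zero_mem)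
  have hFy : ∀ i, F i y = 0 := by
    intro i
    rw [hy, map_sub, map_sum]
    have hsum : ∑ j, F i (F j z • E j) = F i z := by
      rw [Finset.sum_eq_single i]
      · simp [map_smul, hbi]
      · intro j _ hj
        simp [map_smul, hbi, (Ne.symm hj : ¬ i = j)]
      · intro h
        exact absurd (Finset.mem_univ i) h
    rw [hsum, sub_self]
  set x : X := ‖y‖⁻¹ • y with hx
  have hxW : x ∉ W := by
    intro hmem
    apply hyW
    have hyx : y = ‖y‖ • x := by
      rw [hx, smul_smul, mul_inv_cancel₀ (norm_ne_zero_iff.2 hy0), one_smul]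
    rw [hyx]
    exact Submodule.smul_mem _ _ hmem
  have hWclosed : IsClosed (W : Set X) := W.closed_of_finiteDimensional
  obtain ⟨g, u, hgW, hgx⟩ := geometric_hahn_banach_closed_point
    (W.convex) hWclosed hxW
  have hgW0 : ∀ w ∈ W, g w = 0 := by
    intro w hw
    by_contra hne
    have h2 := hgW (((u + 1) / g w) • w) (W.smul_mem _ hw)
    rw [map_smul, smul_eq_mul, div_mul_cancel₀ _ hne] at h2
    linarith
  have hu0 : 0 < u := by
    have := hgW 0 W.zero_mem
    simpa using this
  have hgx0 : g x ≠ 0 := ne_of_gt (lt_trans hu0 hgx)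
  refine ⟨x, (g x)⁻¹ • g, ?_, ?_, ?_, ?_⟩
  · rw [hx, norm_smul, norm_inv, norm_norm, inv_mul_cancel₀ (norm_ne_zero_iff.2 hy0)]
  · intro i
    rw [hx, map_smul, hFy i, smul_zero]
  · intro i
    have : g (E i) = 0 := hgW0 _ (Submodule.subset_span ⟨i, rfl⟩)
    simp [this]
  · simp [inv_mul_cancel₀ hgx0]

def SysT (X : Type*) [NormedAddCommGroup X] [NormedSpace ℝ X] (n : ℕ) :=
  {p : (Fin n → X) × (Fin n → X →L[ℝ] ℝ) //
    (∀ i j, p.2 i (p.1 j) = if i = j then 1 else 0) ∧ (∀ i, ‖p.1 i‖ ≤ 1)}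

noncomputable def stepT [CompleteSpace X] (hinf : ¬ FiniteDimensional ℝ X) {n : ℕ}
    (p : SysT X n) : SysT X (n + 1) :=
  ⟨(Fin.snoc p.1.1 (Classical.choose (exists_next hinf p.1.1 p.1.2 p.2.1)),
    Fin.snoc p.1.2 (Classical.choose (Classical.choose_spec
      (exists_next hinf p.1.1 p.1.2 p.2.1)))), by
    obtain ⟨h1, h2, h3, h4⟩ := Classical.choose_spec (Classical.choose_spec
      (exists_next hinf p.1.1 p.1.2 p.2.1))
    dsimp only
    constructor
    · intro i j
      refine Fin.lastCases ?_ (fun i' => ?_) i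
      · refine Fin.lastCases ?_ (fun j' => ?_) j
        · simp only [Fin.snoc_last, if_pos rfl]
          exact h4
        · rw [Fin.snoc_last, Fin.snoc_castSucc, if_neg (Fin.castSucc_lt_last j').ne']
          exact h3 j'
      · refine Fin.lastCases ?_ (fun j' => ?_) j
        · rw [Fin.snoc_castSucc, Fin.snoc_last, if_neg (Fin.castSucc_lt_last i').ne]
          exact h2 i'
        · rw [Fin.snoc_castSucc, Fin.snoc_castSucc, p.2.1 i' j']
          simp [Fin.castSucc_inj]
    · intro i
      refine Fin.lastCases ?_ (fun i' => ?_) i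
      · simpa [Fin.snoc_last] using h1
      · simpa [Fin.snoc_castSucc] using p.2.2 i'⟩

lemma stepT_fst [CompleteSpace X] (hinf : ¬ FiniteDimensional ℝ X) {n : ℕ}
    (p : SysT X n) (i : Fin n) : (stepT hinf p).1.1 i.castSucc = p.1.1 i := by
  simp [stepT]

lemma stepT_snd [CompleteSpace X] (hinf : ¬ FiniteDimensional ℝ X) {n : ℕ}
    (p : SysT X n) (i : Fin n) : (stepT hinf p).1.2 i.castSucc = p.1.2 i := by
  simp [stepT]

noncomputable def sysAux [CompleteSpace X] (hinf : ¬ FiniteDimensional ℝ X) :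
    (n : ℕ) → SysT X n
  | 0 => ⟨(fun i => i.elim0, fun i => i.elim0), fun i => i.elim0, fun i => i.elim0⟩
  | (n + 1) => stepT hinf (sysAux hinf n)

lemma sysAux_coh [CompleteSpace X] (hinf : ¬ FiniteDimensional ℝ X) :
    ∀ n k (h : k < n),
      (sysAux (X := X) hinf n).1.1 ⟨k, h⟩ = (sysAux hinf (k+1)).1.1 (Fin.last k) ∧
      (sysAux (X := X) hinf n).1.2 ⟨k, h⟩ = (sysAux hinf (k+1)).1.2 (Fin.last k) := by
  intro n
  induction n with
  | zero => omega
  | succ m IH =>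
    intro k hk
    rcases Nat.lt_or_ge k m with h1 | h1
    · have e1 : (⟨k, hk⟩ : Fin (m+1)) = Fin.castSucc ⟨k, h1⟩ := rfl
      have hs : sysAux (X := X) hinf (m+1) = stepT hinf (sysAux hinf m) := rfl
      constructor
      · rw [e1, hs, stepT_fst]
        exact (IH k h1).1
      · rw [e1, hs, stepT_snd]
        exact (IH k h1).2
    · have hkm : k = m := by omega
      subst hkm
      exact ⟨rfl, rfl⟩

lemma exists_biorth [CompleteSpace X] (hinf : ¬ FiniteDimensional ℝ X) :
    ∃ (e : ℕ → X) (f : ℕ → X →L[ℝ] ℝ), (∀ k, ‖e k‖ ≤ 1) ∧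
      ∀ j k, f j (e k) = if j = k then 1 else 0 := by
  refine ⟨fun k => (sysAux hinf (k+1)).1.1 (Fin.last k),
    fun k => (sysAux hinf (k+1)).1.2 (Fin.last k), ?_, ?_⟩
  · intro k
    exact (sysAux hinf (k+1)).2.2 _
  · intro j k
    have hj : j < max j k + 1 := by omega
    have hk : k < max j k + 1 := by omega
    have cj := (sysAux_coh hinf (max j k + 1) j hj).2
    have ck := (sysAux_coh hinf (max j k + 1) k hk).1
    show ((sysAux hinf (j + 1)).1.2 (Fin.last j)) ((sysAux hinf (k + 1)).1.1 (Fin.last k))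
      = if j = k then 1 else 0
    rw [← cj, ← ck, (sysAux hinf (max j k + 1)).2.1 ⟨j, hj⟩ ⟨k, hk⟩]
    by_cases h : j = k <;> simp [h, Fin.mk.injEq]


lemma Ph_zero : Ph r e c (fun _ => (0:ℝ)) = 0 := by simp [Ph]

lemma Nice.linInd (hn : Nice r e c f) (n : ℕ) :
    LinearIndependent ℝ (fun i : Fin n => e (i : ℕ)) := by
  rw [linearIndependent_iff']
  intro s g hsum i hi
  have h1 := congrArg (f (i : ℕ)) hsum
  rw [map_sum, map_zero] at h1
  rw [Finset.sum_eq_single i] at h1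
  · simpa [map_smul, hn.bi] using h1
  · intro j _ hj
    have : ¬ ((i : ℕ) = (j : ℕ)) := fun h => hj (Fin.val_injective h).symm
    simp [map_smul, hn.bi, this]
  · intro h
    exact absurd hi h

theorem main [CompleteSpace X] (hn : Nice r e c f) (hrnull : Tendsto r atTop (nhds 0)) :
    ∃ (K : Set X) (F : X → X),
      K.Nonempty ∧ Bornology.IsBounded K ∧ IsClosed K ∧ Convex ℝ K ∧
      K ⊆ Metric.closedBall (0 : X) 1 ∧
      (∃ E : ℕ → Submodule ℝ X, ∀ n : ℕ, 1 ≤ n →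
        Module.finrank ℝ (E n) = n ∧
        (K ∩ (E n : Set X)).Nonempty ∧ IsCompact (K ∩ (E n : Set X)) ∧
        ∀ x ∈ K, Metric.infDist x (K ∩ (E n : Set X)) ≤ r n) ∧
      Set.MapsTo F K K ∧
      (∀ y ∈ K, F y ≠ y) ∧
      (∀ y ∈ K, ∀ z ∈ K, ∀ t : ℝ, t ∈ Set.Icc (0 : ℝ) 1 →
        F ((1 - t) • y + t • z) = (1 - t) • F y + t • F z) ∧
      (∀ n : ℕ, 1 ≤ n → ∀ y ∈ K, ∀ z ∈ K,
        ‖F^[n] y - F^[n] z‖ ≤ r n * (‖y - z‖ + 1)) := by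
  -- compactness of the coefficient simplex
  have hDclosed : IsClosed Dset := by
    rw [show Dset = (⋂ k, {t : ℕ → ℝ | 0 ≤ t k}) ∩
        ⋂ s : Finset ℕ, {t : ℕ → ℝ | ∑ k ∈ s, t k ≤ 1} from by
      ext t; simp [Dset, Set.mem_iInter]]
    exact (isClosed_iInter fun k => isClosed_le continuous_const (continuous_apply k)).inter
      (isClosed_iInter fun s =>
        isClosed_le (continuous_finset_sum s fun k _ => continuous_apply k) continuous_const)
  have hDc : IsCompact Dset := by
    refine IsCompact.of_isClosed_subset (isCompact_univ_pi fun _ : ℕ => isCompact_Icc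
      (a := (0:ℝ)) (b := 1)) hDclosed ?_
    intro t ht k _
    refine ⟨ht.1 k, ?_⟩
    have := ht.2 {k}
    simpa using this
  have hcont : ContinuousOn (Ph r e c) Dset := by
    have htu : TendstoUniformlyOn (fun N t => ∑ k ∈ Finset.range N, t k • vv r e c k)
        (Ph r e c) atTop Dset := by
      rw [Metric.tendstoUniformlyOn_iff]
      intro ε hε
      have hto : Tendsto (fun N : ℕ => c * r (N + 1)) atTop (nhds 0) := by
        have h1 : Tendsto (fun N : ℕ => r (N + 1)) atTop (nhds 0) :=
          hrnull.comp (tendsto_add_atTop_nat 1)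
        simpa using h1.const_mul c
      filter_upwards [hto.eventually_lt_const hε] with N hN t ht
      rw [dist_eq_norm]
      exact lt_of_le_of_lt (Ph_tail hn ht N) hN
    exact htu.continuousOn (Filter.Eventually.of_forall fun N =>
      (continuous_finset_sum _ fun k _ => (continuous_apply k).smul continuous_const).continuousOn).frequently
  have hKc : IsCompact (Ph r e c '' Dset) := hDc.image_of_continuousOn hcont
  have hzeroK : (0 : X) ∈ Ph r e c '' Dset := ⟨fun _ => 0, D_zero, Ph_zero⟩
  refine ⟨Ph r e c '' Dset, Fm r e c f, ⟨0, hzeroK⟩, hKc.isBounded, hKc.isClosed, ?_, ?_, ?_,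
    ?_, ?_, ?_, ?_⟩
  · -- convex
    intro x hx y hy α β hα hβ hαβ
    obtain ⟨a, ha, rfl⟩ := hx
    obtain ⟨b, hb, rfl⟩ := hy
    have hβ1 : β ≤ 1 := by linarith
    have hαβ' : α = 1 - β := by linarith
    refine ⟨fun k => (1 - β) * a k + β * b k, D_convex ha hb hβ hβ1, ?_⟩
    rw [Ph_combo hn (D_summable ha) (D_summable hb) β, hαβ']
  · -- in unit ball
    rintro x ⟨t, ht, rfl⟩
    rw [Metric.mem_closedBall, dist_zero_right]
    exact (Ph_norm hn ht).trans hn.hc1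
  · -- flatness
    refine ⟨fun n => Submodule.span ℝ (Set.range fun i : Fin n => e (i : ℕ)), ?_⟩
    intro n hn1
    haveI : FiniteDimensional ℝ
        (Submodule.span ℝ (Set.range fun i : Fin n => e (i : ℕ))) :=
      FiniteDimensional.span_of_finite ℝ (Set.finite_range _)
    refine ⟨?_, ?_, ?_, ?_⟩
    · rw [finrank_span_eq_card (hn.linInd n), Fintype.card_fin]
    · exact ⟨0, hzeroK, Submodule.zero_mem _⟩
    · exact hKc.inter_right (Submodule.closed_of_finiteDimensional _)
    · rintro x ⟨t, ht, rfl⟩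
      set t' : ℕ → ℝ := fun k => if k < n then t k else 0 with ht'def
      have ht' : t' ∈ Dset := by
        constructor
        · intro k
          by_cases h : k < n <;> simp [t', h, ht.1 k]
        · intro s
          refine le_trans (Finset.sum_le_sum fun k _ => ?_) (ht.2 s)
          by_cases h : k < n <;> simp [t', h, ht.1 k]
      have hPh' : Ph r e c t' = ∑ k ∈ Finset.range n, t k • vv r e c k := by
        rw [Ph, tsum_eq_sum (s := Finset.range n)]
        · refine Finset.sum_congr rfl fun k hk => ?_
          simp [t', Finset.mem_range.mp hk]
        · intro k hk
          rw [Finset.mem_range] at hk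
          simp [t', hk]
      have hmem : Ph r e c t' ∈ (Ph r e c '' Dset) ∩
          (Submodule.span ℝ (Set.range fun i : Fin n => e (i : ℕ)) : Set X) := by
        refine ⟨⟨t', ht', rfl⟩, ?_⟩
        rw [hPh']
        refine Submodule.sum_mem _ fun k hk => ?_
        have hek : e k ∈ Submodule.span ℝ (Set.range fun i : Fin n => e (i : ℕ)) :=
          Submodule.subset_span ⟨⟨k, Finset.mem_range.mp hk⟩, rfl⟩
        exact Submodule.smul_mem _ _ (Submodule.smul_mem _ _ hek)
      refine le_trans (Metric.infDist_le_dist_of_mem hmem) ?_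
      rw [dist_eq_norm, hPh']
      refine (Ph_tail hn ht n).trans ?_
      have h1 : r (n + 1) ≤ r n := hn.rdec n (n + 1) hn1 (by omega)
      have h2 : 0 < r (n + 1) := hn.rpos _ (by omega)
      nlinarith [hn.hc0, hn.hc2]
  · -- maps to
    rintro x ⟨t, ht, rfl⟩
    rw [Fm_Ph hn ht]
    exact ⟨Sm t, Sm_mem ht, rfl⟩
  · -- fixed point free
    rintro y ⟨t, ht, rfl⟩
    exact Fm_fpf hn ht
  · -- affine
    rintro y ⟨a, ha, rfl⟩ z ⟨b, hb, rfl⟩ s hs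
    rw [← Ph_combo hn (D_summable ha) (D_summable hb) s,
      Fm_Ph hn (D_convex ha hb hs.1 hs.2), Fm_Ph hn ha, Fm_Ph hn hb,
      ← Ph_combo hn (D_summable (Sm_mem ha)) (D_summable (Sm_mem hb)) s]
    congr 1
    funext k
    cases k with
    | zero =>
      have hta : Summable fun j => (1 - s) * a j := (D_summable ha).mul_left _
      have htb : Summable fun j => s * b j := (D_summable hb).mul_left _
      show (1 - ∑' j, ((1 - s) * a j + s * b j))
          = (1 - s) * (1 - ∑' j, a j) + s * (1 - ∑' j, b j)
      rw [Summable.tsum_add hta htb, tsum_mul_left, tsum_mul_left]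
      ring
    | succ m =>
      simp [Sm]
  · -- iterate bounds
    rintro n hn1 y ⟨a, ha, rfl⟩ z ⟨b, hb, rfl⟩
    refine (Fm_iter_bound hn ha hb hn1).trans ?_
    have h1 : 0 < r n := hn.rpos n hn1
    nlinarith [norm_nonneg (Ph r e c a - Ph r e c b), hn.hc0, hn.hc2]

end Construction


/-- Let `X` be an infinite-dimensional real Banach space and `(rₙ)` a
decreasing null sequence of positive reals with `r_{n+k} ≤ rₙ · r_k`.  Then there exist a
nonempty bounded closed convex `(rₙ)`-flat set `K ⊆ B_X` and a fixed-point-free affine map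
`F : K → K` with `‖Fⁿ x − Fⁿ y‖ ≤ rₙ (‖x − y‖ + 1)` for all `x, y ∈ K` and `n`. -/
theorem statement18 {X : Type*} [NormedAddCommGroup X] [NormedSpace ℝ X] [CompleteSpace X]
    (hinf : ¬ FiniteDimensional ℝ X)
    (r : ℕ → ℝ) (hrpos : ∀ n : ℕ, 1 ≤ n → 0 < r n)
    (hrdec : ∀ m n : ℕ, 1 ≤ m → m ≤ n → r n ≤ r m)
    (hrnull : Filter.Tendsto r Filter.atTop (nhds 0))
    (hrsub : ∀ n k : ℕ, 1 ≤ n → 1 ≤ k → r (n + k) ≤ r n * r k) :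
    ∃ (K : Set X) (F : X → X),
      K.Nonempty ∧ Bornology.IsBounded K ∧ IsClosed K ∧ Convex ℝ K ∧
      K ⊆ Metric.closedBall (0 : X) 1 ∧
      (∃ E : ℕ → Submodule ℝ X, ∀ n : ℕ, 1 ≤ n →
        Module.finrank ℝ (E n) = n ∧
        (K ∩ (E n : Set X)).Nonempty ∧ IsCompact (K ∩ (E n : Set X)) ∧
        ∀ x ∈ K, Metric.infDist x (K ∩ (E n : Set X)) ≤ r n) ∧
      Set.MapsTo F K K ∧
      (∀ y ∈ K, F y ≠ y) ∧
      (∀ y ∈ K, ∀ z ∈ K, ∀ t : ℝ, t ∈ Set.Icc (0 : ℝ) 1 →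
        F ((1 - t) • y + t • z) = (1 - t) • F y + t • F z) ∧
      (∀ n : ℕ, 1 ≤ n → ∀ y ∈ K, ∀ z ∈ K,
        ‖F^[n] y - F^[n] z‖ ≤ r n * (‖y - z‖ + 1)) := by
  obtain ⟨e, f, he, hbi⟩ := exists_biorth hinf
  have hr1 : 0 < r 1 := hrpos 1 le_rfl
  set c : ℝ := min (1/2) (1 / r 1) with hc
  have hc0 : 0 < c := lt_min (by norm_num) (by positivity)
  have hc1 : c * r 1 ≤ 1 := by
    have h1 : c ≤ 1 / r 1 := min_le_right _ _
    calc c * r 1 ≤ (1 / r 1) * r 1 := mul_le_mul_of_nonneg_right h1 hr1.le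
      _ = 1 := by field_simp
  have hc2 : c ≤ 1/2 := min_le_left _ _
  have hnice : Nice r e c f := ⟨hrpos, hrdec, he, hbi, hc0, hc1, hc2⟩
  exact main hnice hrnull
end
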